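/- arXiv:2112.00254 — 10 statements merged into one kernel-verified Lean document; each statement's English description precedes it below -/
import Mathlib

section
/- With Q and M as defined, the matrix M is invertible and Q·M⁻¹ equals the block matrix H, i.e., Q·M⁻¹ = [[r·Iₙ + ((1−α)/s)·AᵀA, Aᵀ], [A, s·Iₘ]]. -/
open Matrix

theorem stmt_0 (n m : ℕ) (hn : 0 < n) (hm : 0 < m)
    (A : Matrix (Fin m) (Fin n) ℝ) (r s α : ℝ) (hr : 0 < r) (hs : 0 < s)
    (Q M H : Matrix (Fin n ⊕ Fin m) (Fin n ⊕ Fin m) ℝ)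
    (hQ : Q = Matrix.fromBlocks (r • 1) Aᵀ (α • A) (s • 1))
    (hM : M = Matrix.fromBlocks 1 0 (-(((1 - α) / s) • A)) 1)
    (hH : H = Matrix.fromBlocks (r • 1 + ((1 - α) / s) • (Aᵀ * A)) Aᵀ A (s • 1)) :
    IsUnit M ∧ Q * M⁻¹ = H := by
  set N : Matrix (Fin n ⊕ Fin m) (Fin n ⊕ Fin m) ℝ :=
    Matrix.fromBlocks 1 0 ((((1 - α) / s)) • A) 1 with hN
  have hMN : M * N = 1 := by
    rw [hM, hN, Matrix.fromBlocks_multiply]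
    simp [Matrix.fromBlocks_one]
  have hNM : N * M = 1 := by
    rw [hM, hN, Matrix.fromBlocks_multiply]
    simp [Matrix.fromBlocks_one]
  have hU : IsUnit M := isUnit_iff_exists.mpr ⟨N, hMN, hNM⟩
  have hinv : M⁻¹ = N := inv_eq_right_inv hMN
  refine ⟨hU, ?_⟩
  rw [hinv, hQ, hN, hH, Matrix.fromBlocks_multiply]
  have h1 : α • A + ((1 - α) / s) • s • A = A := by
    rw [smul_smul, div_mul_cancel₀ _ hs.ne', ← add_smul]
    norm_num
  congr 1 <;> simp [Matrix.mul_smul, Matrix.smul_mul, h1]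
end

section
/- With Q and M as defined, Qᵀ + Q − MᵀQ equals the block matrix G, i.e., Qᵀ + Q − MᵀQ = [[r·Iₙ + (α(1−α)/s)·AᵀA, Aᵀ], [A, s·Iₘ]]; since Q = (Q·M⁻¹)·M, this is exactly Qᵀ + Q − Mᵀ(Q·M⁻¹)M. -/
open Matrix

theorem stmt_1 (n m : ℕ) (hn : 0 < n) (hm : 0 < m)
    (A : Matrix (Fin m) (Fin n) ℝ) (r s α : ℝ) (hr : 0 < r) (hs : 0 < s)
    (Q M G : Matrix (Fin n ⊕ Fin m) (Fin n ⊕ Fin m) ℝ)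
    (hQ : Q = Matrix.fromBlocks (r • 1) Aᵀ (α • A) (s • 1))
    (hM : M = Matrix.fromBlocks 1 0 (-(((1 - α) / s) • A)) 1)
    (hG : G = Matrix.fromBlocks (r • 1 + ((α * (1 - α)) / s) • (Aᵀ * A)) Aᵀ A (s • 1)) :
    Qᵀ + Q - Mᵀ * Q = G ∧ Qᵀ + Q - Mᵀ * (Q * M⁻¹) * M = G := by
  have hMinv : M⁻¹ = Matrix.fromBlocks 1 0 (((1 - α) / s) • A) 1 := by
    apply Matrix.inv_eq_right_inv
    subst hM
    simp [Matrix.fromBlocks_multiply]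
  have hQM : Q * M⁻¹ * M = Q := by
    rw [hMinv, hM]
    rw [Matrix.mul_assoc]
    simp [Matrix.fromBlocks_multiply]
  have h1 : Qᵀ + Q - Mᵀ * Q = G := by
    subst hQ hM hG
    ext i j
    simp [Matrix.fromBlocks_transpose, Matrix.fromBlocks_multiply, Matrix.fromBlocks_add,
      Matrix.transpose_smul, Matrix.sub_apply, Matrix.add_apply]
    cases i <;> cases j <;>
      simp [Matrix.fromBlocks, Matrix.add_apply, Matrix.sub_apply, Matrix.smul_apply,
        Matrix.one_apply, mul_comm] <;> ring_nf <;>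
      field_simp <;> ring
  refine ⟨h1, ?_⟩
  rw [Matrix.mul_assoc Mᵀ, Matrix.mul_assoc, ← Matrix.mul_assoc Q, hQM]
  exact h1
end

section
/- Let C be the (n+m)×(n+m) block matrix C = [[Iₙ, 0], [−(1/s)·A, Iₘ]]. Then CᵀHC = [[r·Iₙ − (α/s)·AᵀA, 0], [0, s·Iₘ]] and CᵀGC = [[r·Iₙ − ((1−α+α²)/s)·AᵀA, 0], [0, s·Iₘ]]. -/
open Matrix

theorem stmt_2 (n m : ℕ) (hn : 0 < n) (hm : 0 < m)
    (A : Matrix (Fin m) (Fin n) ℝ) (r s α : ℝ) (hr : 0 < r) (hs : 0 < s)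
    (H G C : Matrix (Fin n ⊕ Fin m) (Fin n ⊕ Fin m) ℝ)
    (hH : H = Matrix.fromBlocks (r • 1 + ((1 - α) / s) • (Aᵀ * A)) Aᵀ A (s • 1))
    (hG : G = Matrix.fromBlocks (r • 1 + ((α * (1 - α)) / s) • (Aᵀ * A)) Aᵀ A (s • 1))
    (hC : C = Matrix.fromBlocks 1 0 (-((1 / s) • A)) 1) :
    Cᵀ * H * C = Matrix.fromBlocks (r • 1 - (α / s) • (Aᵀ * A)) 0 0 (s • 1) ∧
    Cᵀ * G * C =
      Matrix.fromBlocks (r • 1 - ((1 - α + α ^ 2) / s) • (Aᵀ * A)) 0 0 (s • 1) := by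
  subst hH hG hC
  constructor <;>
  · rw [fromBlocks_transpose, fromBlocks_multiply, fromBlocks_multiply]
    ext i j
    rcases i with i | i <;> rcases j with j | j <;>
      simp [Matrix.mul_apply, Matrix.one_apply, Finset.mul_sum, Finset.sum_mul] <;>
      ring_nf <;>
      simp [mul_assoc, mul_inv_cancel₀ hs.ne', Finset.sum_add_distrib, Finset.sum_sub_distrib,
        mul_sub, sub_mul, mul_comm, mul_left_comm] <;>
      ring_nf <;>
      simp [mul_add, mul_neg, Finset.sum_add_distrib, Finset.sum_sub_distrib, mul_assoc,
        mul_inv_cancel₀ hs.ne', mul_comm, mul_left_comm] <;>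
      ring_nf <;> field_simp <;> ring
end

section
/- The symmetric block matrix G = [[r·Iₙ + (α(1−α)/s)·AᵀA, Aᵀ], [A, s·Iₘ]] is positive definite if and only if the n×n matrix r·s·Iₙ − (1−α+α²)·AᵀA is positive definite. -/
open Matrix

section Aux

variable {p q : Type*} [Fintype p] [Fintype q] [DecidableEq q]

private lemma aux_smul_posDef {k : ℕ} {M : Matrix (Fin k) (Fin k) ℝ} {c : ℝ} (hc : 0 < c)
    (hM : M.PosDef) : (c • M).PosDef := by
  refine Matrix.PosDef.of_dotProduct_mulVec_pos ?_ (fun x hx => ?_)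
  · unfold Matrix.IsHermitian
    rw [conjTranspose_smul, hM.1.eq]
    simp
  · have := hM.dotProduct_mulVec_pos hx
    rw [smul_mulVec, dotProduct_smul]
    exact mul_pos hc this

private lemma aux_smul_posDef_iff {k : ℕ} {M : Matrix (Fin k) (Fin k) ℝ} {c : ℝ} (hc : 0 < c) :
    (c • M).PosDef ↔ M.PosDef := by
  constructor
  · intro h
    have := aux_smul_posDef (inv_pos.mpr hc) h
    rwa [inv_smul_smul₀ hc.ne'] at this
  · exact aux_smul_posDef hc

private lemma posDef_fromBlocks₂₂' (A : Matrix p p ℝ) (B : Matrix p q ℝ) {D : Matrix q q ℝ}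
    (hD : D.PosDef) [Invertible D] :
    (fromBlocks A B Bᴴ D).PosDef ↔ (A - B * D⁻¹ * Bᴴ).PosDef := by
  constructor
  · intro h
    refine Matrix.PosDef.of_dotProduct_mulVec_pos ((Matrix.IsHermitian.fromBlocks₂₂ _ _ hD.isHermitian).mp h.isHermitian) (fun x hx => ?_)
    have hz : (x ⊕ᵥ -((D⁻¹ * Bᴴ) *ᵥ x)) ≠ 0 := by
      intro hcontra
      apply hx
      ext i
      have := congrFun hcontra (Sum.inl i)
      simpa using this
    have := h.dotProduct_mulVec_pos hz
    rw [dotProduct_mulVec, Matrix.schur_complement_eq₂₂ A B x _ hD.isHermitian, add_neg_cancel] at this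
    simpa [dotProduct_mulVec] using this
  · intro h
    refine Matrix.PosDef.of_dotProduct_mulVec_pos ((Matrix.IsHermitian.fromBlocks₂₂ _ _ hD.isHermitian).mpr h.isHermitian) (fun z hz => ?_)
    rw [dotProduct_mulVec, ← Sum.elim_comp_inl_inr z,
      Matrix.schur_complement_eq₂₂ A B _ _ hD.isHermitian]
    by_cases hx : z ∘ Sum.inl = 0
    · have hy : z ∘ Sum.inr ≠ 0 := by
        intro hy
        apply hz
        ext (i | j)
        · exact congrFun hx i
        · exact congrFun hy j
      rw [hx]
      simp only [mulVec_zero, zero_add]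
      have h1 := hD.dotProduct_mulVec_pos hy
      have h2 : (star (0 : p → ℝ)) ᵥ* (A - B * D⁻¹ * Bᴴ) ⬝ᵥ (0 : p → ℝ) = 0 := by simp
      rw [h2, add_zero, ← dotProduct_mulVec]
      exact h1
    · have h1 := h.dotProduct_mulVec_pos hx
      rw [dotProduct_mulVec] at h1
      have h2 : 0 ≤ (star ((D⁻¹ * Bᴴ) *ᵥ (z ∘ Sum.inl) + z ∘ Sum.inr)) ᵥ* D ⬝ᵥ
          ((D⁻¹ * Bᴴ) *ᵥ (z ∘ Sum.inl) + z ∘ Sum.inr) := by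
        rw [← dotProduct_mulVec]
        exact hD.posSemidef.dotProduct_mulVec_nonneg _
      linarith

end Aux

theorem stmt_4 (n m : ℕ) (hn : 0 < n) (hm : 0 < m)
    (A : Matrix (Fin m) (Fin n) ℝ) (r s α : ℝ) (hr : 0 < r) (hs : 0 < s)
    (G : Matrix (Fin n ⊕ Fin m) (Fin n ⊕ Fin m) ℝ)
    (hG : G = Matrix.fromBlocks (r • 1 + ((α * (1 - α)) / s) • (Aᵀ * A)) Aᵀ A (s • 1)) :
    G.PosDef ↔
      ((r * s) • (1 : Matrix (Fin n) (Fin n) ℝ) - (1 - α + α ^ 2) • (Aᵀ * A)).PosDef := by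
  subst hG
  have hAH : (Aᵀ)ᴴ = A := by
    ext i j; simp [conjTranspose_apply]
  have hD : (s • (1 : Matrix (Fin m) (Fin m) ℝ)).PosDef := by
    refine Matrix.PosDef.of_dotProduct_mulVec_pos ?_ (fun x hx => ?_)
    · unfold Matrix.IsHermitian
      simp
    · have h1 : (s • (1 : Matrix (Fin m) (Fin m) ℝ)) *ᵥ x = s • x := by
        simp [smul_mulVec]
      rw [h1]
      have : (0:ℝ) < star x ⬝ᵥ x := by
        have := dotProduct_star_self_pos_iff (v := x) |>.mpr hx
        simpa using this
      simpa [dotProduct_smul, mul_comm] using mul_pos hs this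
  haveI : Invertible (s • (1 : Matrix (Fin m) (Fin m) ℝ)) :=
    ⟨s⁻¹ • 1, by rw [smul_mul_smul_comm, inv_mul_cancel₀ hs.ne', one_mul, one_smul],
      by rw [smul_mul_smul_comm, mul_inv_cancel₀ hs.ne', one_mul, one_smul]⟩
  have hinv : (s • (1 : Matrix (Fin m) (Fin m) ℝ))⁻¹ = s⁻¹ • 1 := by
    apply Matrix.inv_eq_left_inv
    rw [smul_mul_smul_comm, inv_mul_cancel₀ hs.ne', one_mul, one_smul]
  have hGe : fromBlocks (r • 1 + (α * (1 - α) / s) • (Aᵀ * A)) Aᵀ A (s • 1)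
      = fromBlocks (r • 1 + (α * (1 - α) / s) • (Aᵀ * A)) Aᵀ (Aᵀ)ᴴ (s • 1) := by rw [hAH]
  rw [hGe, posDef_fromBlocks₂₂' _ _ hD, hAH, hinv]
  have key : r • (1 : Matrix (Fin n) (Fin n) ℝ) + (α * (1 - α) / s) • (Aᵀ * A)
      - Aᵀ * (s⁻¹ • (1 : Matrix (Fin m) (Fin m) ℝ)) * A
      = s⁻¹ • ((r * s) • (1 : Matrix (Fin n) (Fin n) ℝ) - (1 - α + α ^ 2) • (Aᵀ * A)) := by
    rw [Matrix.mul_smul, Matrix.mul_one, Matrix.smul_mul]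
    match_scalars <;> field_simp <;> ring
  rw [key, aux_smul_posDef_iff (inv_pos.mpr hs)]
end

section
/- (Proposition 1) If r·s > (1−α+α²)·λmax(AᵀA), where λmax(AᵀA) denotes the largest eigenvalue of the positive semidefinite matrix AᵀA, then both block matrices H = [[r·Iₙ + ((1−α)/s)·AᵀA, Aᵀ], [A, s·Iₘ]] and G = [[r·Iₙ + (α(1−α)/s)·AᵀA, Aᵀ], [A, s·Iₘ]] are positive definite. -/
open Matrix

section Aux

variable {k : ℕ}

lemma unitary_conj_posDef {U N : Matrix (Fin k) (Fin k) ℝ}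
    (hU : U ∈ Matrix.unitaryGroup (Fin k) ℝ) (hN : N.PosDef) :
    (U * N * star U).PosDef := by
  have hUU : U * star U = 1 := Matrix.mem_unitaryGroup_iff.mp hU
  have hUU' : star U * U = 1 := Matrix.mem_unitaryGroup_iff'.mp hU
  rw [posDef_iff_dotProduct_mulVec]
  constructor
  · have : (U * N * star U)ᴴ = U * Nᴴ * star U := by
      rw [Matrix.star_eq_conjTranspose, conjTranspose_mul, conjTranspose_mul,
        conjTranspose_conjTranspose, Matrix.mul_assoc]
    rw [Matrix.IsHermitian, this, hN.1]
  · intro x hx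
    set y := star U *ᵥ x with hy
    have hy0 : y ≠ 0 := by
      intro h
      apply hx
      have : U *ᵥ y = x := by
        rw [hy, mulVec_mulVec, hUU, one_mulVec]
      rw [← this, h, mulVec_zero]
    have hrw : dotProduct (star x) ((U * N * star U) *ᵥ x)
        = dotProduct (star y) (N *ᵥ y) := by
      rw [← mulVec_mulVec, ← mulVec_mulVec, dotProduct_mulVec (star x)]
      congr 1
      rw [hy, star_mulVec, Matrix.star_eq_conjTranspose, conjTranspose_conjTranspose]
    rw [hrw]
    exact hN.dotProduct_mulVec_pos hy0

lemma key_lemma (hk : 0 < k) {M : Matrix (Fin k) (Fin k) ℝ}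
    (hM : M.PosSemidef) (r c : ℝ)
    (hb : ∀ i, c * hM.1.eigenvalues i < r) :
    (r • (1 : Matrix (Fin k) (Fin k) ℝ) - c • M).PosDef := by
  set U : Matrix (Fin k) (Fin k) ℝ := (hM.1.eigenvectorUnitary : Matrix (Fin k) (Fin k) ℝ) with hUdef
  have hUmem : U ∈ Matrix.unitaryGroup (Fin k) ℝ := (hM.1.eigenvectorUnitary).2
  have hUU : U * star U = 1 := Matrix.mem_unitaryGroup_iff.mp hUmem
  have hspec : M = U * diagonal hM.1.eigenvalues * star U := by
    have := hM.1.spectral_theorem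
    simpa using this
  have key : r • (1 : Matrix (Fin k) (Fin k) ℝ) - c • M
      = U * diagonal (fun i => r - c * hM.1.eigenvalues i) * star U := by
    have hd : diagonal (fun i => r - c * hM.1.eigenvalues i)
        = r • (1 : Matrix (Fin k) (Fin k) ℝ) - c • diagonal hM.1.eigenvalues := by
      rw [smul_one_eq_diagonal, ← diagonal_smul, ← diagonal_sub]
      rfl
    rw [hd, Matrix.mul_sub, Matrix.sub_mul]
    congr 1
    · rw [Matrix.mul_smul, Matrix.smul_mul, Matrix.mul_one, hUU]
    · rw [Matrix.mul_smul, Matrix.smul_mul, ← hspec]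
  rw [key]
  exact unitary_conj_posDef hUmem
    (posDef_diagonal_iff.mpr fun i => sub_pos.mpr (hb i))

lemma posDef_fromBlocks {n m : ℕ} (B : Matrix (Fin n) (Fin n) ℝ)
    (A : Matrix (Fin m) (Fin n) ℝ) (s : ℝ) (hs : 0 < s)
    (hSchur : (B - s⁻¹ • (Aᵀ * A)).PosDef) :
    (fromBlocks B Aᵀ A (s • (1 : Matrix (Fin m) (Fin m) ℝ))).PosDef := by
  have hD : (s • (1 : Matrix (Fin m) (Fin m) ℝ)).PosDef := by
    rw [smul_one_eq_diagonal]
    exact Matrix.posDef_diagonal_iff.mpr fun _ => hs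
  haveI : Invertible (s • (1 : Matrix (Fin m) (Fin m) ℝ)) :=
    ⟨s⁻¹ • 1, by rw [Matrix.smul_mul, Matrix.mul_smul, Matrix.mul_one, smul_smul,
        inv_mul_cancel₀ hs.ne', one_smul],
      by rw [Matrix.smul_mul, Matrix.mul_smul, Matrix.mul_one, smul_smul,
        mul_inv_cancel₀ hs.ne', one_smul]⟩
  have hinv : (s • (1 : Matrix (Fin m) (Fin m) ℝ))⁻¹ = s⁻¹ • 1 :=
    Matrix.inv_eq_right_inv (by rw [Matrix.smul_mul, Matrix.mul_smul, Matrix.mul_one, smul_smul,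
      mul_inv_cancel₀ hs.ne', one_smul])
  have hAh : (Aᵀ)ᴴ = A := by
    ext i j; simp [conjTranspose_apply]
  have hSchur' : (B - Aᵀ * (s • (1 : Matrix (Fin m) (Fin m) ℝ))⁻¹ * (Aᵀ)ᴴ).PosDef := by
    rw [hAh, hinv, Matrix.mul_smul, Matrix.mul_one, Matrix.smul_mul]
    exact hSchur
  have hfb : fromBlocks B Aᵀ A (s • (1 : Matrix (Fin m) (Fin m) ℝ))
      = fromBlocks B Aᵀ ((Aᵀ)ᴴ) (s • 1) := by rw [hAh]
  rw [hfb]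
  rw [posDef_iff_dotProduct_mulVec]
  constructor
  · exact (Matrix.IsHermitian.fromBlocks₂₂ B Aᵀ hD.1).mpr hSchur'.1
  · intro x hx
    rw [← Sum.elim_comp_inl_inr x, dotProduct_mulVec,
      schur_complement_eq₂₂ B Aᵀ (x ∘ Sum.inl) (x ∘ Sum.inr) hD.1]
    by_cases hu : x ∘ Sum.inl = 0
    · have hv : x ∘ Sum.inr ≠ 0 := by
        intro h
        apply hx
        funext i
        cases i with
        | inl j => exact congrFun hu j
        | inr j => exact congrFun h j
      rw [hu]
      simp only [mulVec_zero, zero_add, star_zero, Matrix.zero_vecMul, zero_dotProduct,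
        add_zero]
      rw [← dotProduct_mulVec]
      exact hD.dotProduct_mulVec_pos hv
    · apply add_pos_of_nonneg_of_pos
      · rw [← dotProduct_mulVec]
        exact hD.posSemidef.dotProduct_mulVec_nonneg _
      · rw [← dotProduct_mulVec]
        exact hSchur'.dotProduct_mulVec_pos hu

end Aux

theorem stmt_5 (n m : ℕ) (hn : 0 < n) (hm : 0 < m)
    (A : Matrix (Fin m) (Fin n) ℝ) (r s α : ℝ) (hr : 0 < r) (hs : 0 < s)
    (hA : (Aᵀ * A).IsHermitian)
    (hrs : (1 - α + α ^ 2) * (⨆ i, hA.eigenvalues i) < r * s)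
    (H G : Matrix (Fin n ⊕ Fin m) (Fin n ⊕ Fin m) ℝ)
    (hH : H = Matrix.fromBlocks (r • 1 + ((1 - α) / s) • (Aᵀ * A)) Aᵀ A (s • 1))
    (hG : G = Matrix.fromBlocks (r • 1 + ((α * (1 - α)) / s) • (Aᵀ * A)) Aᵀ A (s • 1)) :
    H.PosDef ∧ G.PosDef := by
  subst hH hG
  have hMpsd : (Aᵀ * A).PosSemidef := posSemidef_conjTranspose_mul_self A
  haveI : Nonempty (Fin n) := Fin.pos_iff_nonempty.mp hn
  set L : ℝ := ⨆ i, hA.eigenvalues i with hLdef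
  have hEnn : ∀ i, 0 ≤ hA.eigenvalues i := fun i => hMpsd.eigenvalues_nonneg i
  have hle : ∀ i, hA.eigenvalues i ≤ L := fun i =>
    le_ciSup (Set.Finite.bddAbove (Set.finite_range _)) i
  have hL0 : 0 ≤ L := le_trans (hEnn ⟨0, hn⟩) (hle ⟨0, hn⟩)
  have hcoeff : (0:ℝ) ≤ 1 - α + α ^ 2 := by nlinarith [sq_nonneg (1 - α), sq_nonneg α]
  constructor
  · apply posDef_fromBlocks _ A s hs
    have e1 : r • (1 : Matrix (Fin n) (Fin n) ℝ) + ((1 - α) / s) • (Aᵀ * A)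
        - s⁻¹ • (Aᵀ * A)
        = r • (1 : Matrix (Fin n) (Fin n) ℝ) - (α / s) • (Aᵀ * A) := by
      match_scalars <;> field_simp <;> ring
    rw [e1]
    apply key_lemma hn hMpsd
    intro i
    have hi : hMpsd.1.eigenvalues i = hA.eigenvalues i := rfl
    rw [hi, div_mul_eq_mul_div, div_lt_iff₀ hs]
    rcases le_or_gt 0 α with hα | hα
    · nlinarith [mul_le_mul_of_nonneg_left (hle i) hα, mul_nonneg hL0 (sq_nonneg (1 - α))]
    · nlinarith [mul_nonpos_of_nonpos_of_nonneg hα.le (hEnn i), mul_nonneg hcoeff hL0]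
  · apply posDef_fromBlocks _ A s hs
    have e2 : r • (1 : Matrix (Fin n) (Fin n) ℝ) + ((α * (1 - α)) / s) • (Aᵀ * A)
        - s⁻¹ • (Aᵀ * A)
        = r • (1 : Matrix (Fin n) (Fin n) ℝ) - ((1 - α + α ^ 2) / s) • (Aᵀ * A) := by
      match_scalars <;> field_simp <;> ring
    rw [e2]
    apply key_lemma hn hMpsd
    intro i
    have hi : hMpsd.1.eigenvalues i = hA.eigenvalues i := rfl
    rw [hi, div_mul_eq_mul_div, div_lt_iff₀ hs]
    nlinarith [mul_le_mul_of_nonneg_left (hle i) hcoeff]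
end

section
/- (Prediction lemma) Let uᵏ = (xᵏ, yᵏ) ∈ ℝⁿ × ℝᵐ and let ũᵏ = (x̃ᵏ, ỹᵏ) be a prediction from uᵏ. Then ũᵏ ∈ Ω and for every u = (x, y) ∈ Ω, θ(u) − θ(ũᵏ) + (u − ũᵏ)ᵀF(ũᵏ) ≥ (u − ũᵏ)ᵀ Q (uᵏ − ũᵏ). -/
open Matrix

noncomputable section

/-- A primal-dual pair `(x, y) ∈ ℝⁿ × ℝᵐ`. -/
abbrev PDVec (n m : ℕ) := (Fin n → ℝ) × (Fin m → ℝ)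

/-- View a primal-dual pair as a single vector indexed by `Fin n ⊕ Fin m`. -/
def pdToVec {n m : ℕ} (u : PDVec n m) : Fin n ⊕ Fin m → ℝ := Sum.elim u.1 u.2

/-- `θ(u) = f(x) + g(y)`. -/
def pdTheta {n m : ℕ} (f : (Fin n → ℝ) → ℝ) (g : (Fin m → ℝ) → ℝ) (u : PDVec n m) : ℝ :=
  f u.1 + g u.2

/-- `F(u) = (−Aᵀy, Ax)`. -/
def pdF {n m : ℕ} (A : Matrix (Fin m) (Fin n) ℝ) (u : PDVec n m) : PDVec n m :=
  (-(Aᵀ.mulVec u.2), A.mulVec u.1)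

/-- `Q = [[r·Iₙ, Aᵀ], [α·A, s·Iₘ]]`. -/
def pdQ {n m : ℕ} (A : Matrix (Fin m) (Fin n) ℝ) (r s α : ℝ) :
    Matrix (Fin n ⊕ Fin m) (Fin n ⊕ Fin m) ℝ :=
  Matrix.fromBlocks (r • 1) Aᵀ (α • A) (s • 1)

/-- `M = [[Iₙ, 0], [−((1−α)/s)·A, Iₘ]]`. -/
def pdM {n m : ℕ} (A : Matrix (Fin m) (Fin n) ℝ) (s α : ℝ) :
    Matrix (Fin n ⊕ Fin m) (Fin n ⊕ Fin m) ℝ :=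
  Matrix.fromBlocks 1 0 (-(((1 - α) / s) • A)) 1

/-- `H = [[r·Iₙ + ((1−α)/s)·AᵀA, Aᵀ], [A, s·Iₘ]]`. -/
def pdH {n m : ℕ} (A : Matrix (Fin m) (Fin n) ℝ) (r s α : ℝ) :
    Matrix (Fin n ⊕ Fin m) (Fin n ⊕ Fin m) ℝ :=
  Matrix.fromBlocks (r • 1 + ((1 - α) / s) • (Aᵀ * A)) Aᵀ A (s • 1)

/-- `G = [[r·Iₙ + (α(1−α)/s)·AᵀA, Aᵀ], [A, s·Iₘ]]`. -/
def pdG {n m : ℕ} (A : Matrix (Fin m) (Fin n) ℝ) (r s α : ℝ) :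
    Matrix (Fin n ⊕ Fin m) (Fin n ⊕ Fin m) ℝ :=
  Matrix.fromBlocks (r • 1 + ((α * (1 - α)) / s) • (Aᵀ * A)) Aᵀ A (s • 1)

/-- `‖v‖²_S = vᵀ S v`. -/
def pdNormSq {k : Type*} [Fintype k] (S : Matrix k k ℝ) (v : k → ℝ) : ℝ :=
  v ⬝ᵥ S.mulVec v

/-- `ut` is a prediction from `uk`: its first component minimizes
`x ↦ f(x) − (yᵏ)ᵀAx + (r/2)‖x − xᵏ‖²` over `X`, and its second component minimizes
`y ↦ g(y) + yᵀA(x̃ᵏ + α(x̃ᵏ − xᵏ)) + (s/2)‖y − yᵏ‖²` over `Y`. -/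
def IsPrediction {n m : ℕ} (X : Set (Fin n → ℝ)) (Y : Set (Fin m → ℝ))
    (f : (Fin n → ℝ) → ℝ) (g : (Fin m → ℝ) → ℝ)
    (A : Matrix (Fin m) (Fin n) ℝ) (r s α : ℝ) (uk ut : PDVec n m) : Prop :=
  ut.1 ∈ X ∧
  (∀ x ∈ X,
      f ut.1 - uk.2 ⬝ᵥ A.mulVec ut.1 + r / 2 * ((ut.1 - uk.1) ⬝ᵥ (ut.1 - uk.1)) ≤
        f x - uk.2 ⬝ᵥ A.mulVec x + r / 2 * ((x - uk.1) ⬝ᵥ (x - uk.1))) ∧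
  ut.2 ∈ Y ∧
  (∀ y ∈ Y,
      g ut.2 + ut.2 ⬝ᵥ A.mulVec (ut.1 + α • (ut.1 - uk.1)) +
          s / 2 * ((ut.2 - uk.2) ⬝ᵥ (ut.2 - uk.2)) ≤
        g y + y ⬝ᵥ A.mulVec (ut.1 + α • (ut.1 - uk.1)) +
          s / 2 * ((y - uk.2) ⬝ᵥ (y - uk.2)))

/-- The solution set `Ω*` of the variational inequality `VI(Ω, F, θ)`. -/
def VISol {n m : ℕ} (X : Set (Fin n → ℝ)) (Y : Set (Fin m → ℝ))
    (f : (Fin n → ℝ) → ℝ) (g : (Fin m → ℝ) → ℝ)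
    (A : Matrix (Fin m) (Fin n) ℝ) : Set (PDVec n m) :=
  {u | u.1 ∈ X ∧ u.2 ∈ Y ∧
    ∀ v : PDVec n m, v.1 ∈ X → v.2 ∈ Y →
      pdTheta f g v - pdTheta f g u + (pdToVec v - pdToVec u) ⬝ᵥ pdToVec (pdF A u) ≥ 0}

lemma aux_pos (c d : ℝ) (h : ∀ t : ℝ, 0 < t → t ≤ 1 → 0 ≤ t * c + t ^ 2 * d) : 0 ≤ c := by
  by_contra hc
  push_neg at hc
  set t := min 1 (-c / (2 * (|d| + 1))) with ht
  have hd : (0:ℝ) < |d| + 1 := by positivity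
  have ht0 : 0 < t := lt_min one_pos (div_pos (by linarith) (by positivity))
  have ht1 : t ≤ 1 := min_le_left _ _
  have h2 : t ≤ -c / (2 * (|d| + 1)) := min_le_right _ _
  have h2' : t * (2 * (|d| + 1)) ≤ -c := by
    rw [← le_div_iff₀ (by positivity)]; exact h2
  have habs : d ≤ |d| := le_abs_self d
  have hht := h t ht0 ht1
  nlinarith [mul_le_mul_of_nonneg_left h2' ht0.le, sq_nonneg t,
    mul_le_mul_of_nonneg_left habs (sq_nonneg t), mul_pos ht0 (neg_pos.mpr hc)]

lemma aux_min {k : ℕ} {C : Set (Fin k → ℝ)} (hC : Convex ℝ C)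
    {φ : (Fin k → ℝ) → ℝ} (hφ : ConvexOn ℝ Set.univ φ)
    (b x0 : Fin k → ℝ) (ρ : ℝ)
    {xt : Fin k → ℝ} (hxt : xt ∈ C)
    (hmin : ∀ x ∈ C, φ xt + b ⬝ᵥ xt + ρ / 2 * ((xt - x0) ⬝ᵥ (xt - x0)) ≤
      φ x + b ⬝ᵥ x + ρ / 2 * ((x - x0) ⬝ᵥ (x - x0)))
    {x : Fin k → ℝ} (hx : x ∈ C) :
    0 ≤ φ x - φ xt + (x - xt) ⬝ᵥ (b + ρ • (xt - x0)) := by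
  have hgoal : φ x - φ xt + (x - xt) ⬝ᵥ (b + ρ • (xt - x0)) =
      φ x - φ xt + b ⬝ᵥ (x - xt) + ρ * ((x - xt) ⬝ᵥ (xt - x0)) := by
    simp [dotProduct_add, dotProduct_smul, dotProduct_comm (x - xt)]
    ring
  rw [hgoal]
  apply aux_pos _ (ρ / 2 * ((x - xt) ⬝ᵥ (x - xt)))
  intro t ht0 ht1
  have hmem : (1 - t) • xt + t • x ∈ C := hC hxt hx (by linarith) ht0.le (by ring)
  have hcv : φ ((1 - t) • xt + t • x) ≤ (1 - t) * φ xt + t * φ x :=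
    hφ.2 (Set.mem_univ _) (Set.mem_univ _) (by linarith) ht0.le (by ring)
  have hm := hmin _ hmem
  have hrepr : (1 - t) • xt + t • x = xt + t • (x - xt) := by
    funext i; simp [Pi.smul_apply, Pi.sub_apply, Pi.add_apply, smul_eq_mul]; ring
  rw [hrepr] at hm hcv
  have key : ((xt + t • (x - xt)) - x0) ⬝ᵥ ((xt + t • (x - xt)) - x0) =
      (xt - x0) ⬝ᵥ (xt - x0) + 2 * t * ((x - xt) ⬝ᵥ (xt - x0)) +
        t ^ 2 * ((x - xt) ⬝ᵥ (x - xt)) := by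
    have h0 : (xt + t • (x - xt)) - x0 = (xt - x0) + t • (x - xt) := by
      funext i; simp [Pi.smul_apply, Pi.sub_apply, Pi.add_apply, smul_eq_mul]; ring
    rw [h0]
    have expand : ∀ v w : Fin k → ℝ, (v + w) ⬝ᵥ (v + w) = v ⬝ᵥ v + 2 * (v ⬝ᵥ w) + w ⬝ᵥ w := by
      intro v w
      simp [dotProduct_add, add_dotProduct, dotProduct_comm w v]
      ring
    rw [expand]
    simp only [dotProduct_smul, smul_dotProduct, smul_eq_mul, dotProduct_sub,
      sub_dotProduct, dotProduct_comm x0 xt, dotProduct_comm x xt, dotProduct_comm x x0]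
    ring
  have key2 : b ⬝ᵥ (xt + t • (x - xt)) = b ⬝ᵥ xt + t * (b ⬝ᵥ (x - xt)) := by
    simp [dotProduct_add, dotProduct_smul]
  rw [key, key2] at hm
  nlinarith [hm, hcv]

lemma sum_elim_sub {n m : ℕ} (a c : Fin n → ℝ) (b d : Fin m → ℝ) :
    Sum.elim a b - Sum.elim c d = Sum.elim (a - c) (b - d) := by
  funext i; cases i <;> simp

/-- Prediction lemma: the predictor satisfies the variational characterization (3.10). -/
theorem stmt_6 (n m : ℕ) (hn : 0 < n) (hm : 0 < m)
    (X : Set (Fin n → ℝ)) (Y : Set (Fin m → ℝ))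
    (hXne : X.Nonempty) (hXcl : IsClosed X) (hXcv : Convex ℝ X)
    (hYne : Y.Nonempty) (hYcl : IsClosed Y) (hYcv : Convex ℝ Y)
    (f : (Fin n → ℝ) → ℝ) (g : (Fin m → ℝ) → ℝ)
    (hf : ConvexOn ℝ Set.univ f) (hg : ConvexOn ℝ Set.univ g)
    (A : Matrix (Fin m) (Fin n) ℝ) (r s α : ℝ) (hr : 0 < r) (hs : 0 < s)
    (uk ut : PDVec n m)
    (hpred : IsPrediction X Y f g A r s α uk ut) :
    ut.1 ∈ X ∧ ut.2 ∈ Y ∧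
      ∀ u : PDVec n m, u.1 ∈ X → u.2 ∈ Y →
        pdTheta f g u - pdTheta f g ut +
            (pdToVec u - pdToVec ut) ⬝ᵥ pdToVec (pdF A ut) ≥
          (pdToVec u - pdToVec ut) ⬝ᵥ (pdQ A r s α).mulVec (pdToVec uk - pdToVec ut) := by
  obtain ⟨hx1, hmin1, hy1, hmin2⟩ := hpred
  refine ⟨hx1, hy1, ?_⟩
  intro u hu1 hu2
  -- x-part
  set b1 : Fin n → ℝ := -(Aᵀ.mulVec uk.2) with hb1def
  have hb1 : ∀ x, b1 ⬝ᵥ x = -(uk.2 ⬝ᵥ A.mulVec x) := by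
    intro x
    simp [hb1def, Matrix.mulVec_transpose, Matrix.dotProduct_mulVec, neg_dotProduct]
  have h1 := aux_min hXcv hf b1 uk.1 r hx1
    (fun x hx => by rw [hb1, hb1]; have := hmin1 x hx; linarith) hu1
  -- y-part
  set b2 : Fin m → ℝ := A.mulVec (ut.1 + α • (ut.1 - uk.1)) with hb2def
  have hb2 : ∀ y : Fin m → ℝ, b2 ⬝ᵥ y = y ⬝ᵥ A.mulVec (ut.1 + α • (ut.1 - uk.1)) := by
    intro y; rw [hb2def, dotProduct_comm]
  have h2 := aux_min hYcv hg b2 uk.2 s hy1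
    (fun y hy => by rw [hb2, hb2]; have := hmin2 y hy; linarith) hu2
  -- expand the goal
  rw [ge_iff_le]
  simp only [pdTheta, pdToVec, pdF, pdQ, sum_elim_sub, Matrix.fromBlocks_mulVec,
    sumElim_dotProduct_sumElim, Sum.elim_comp_inl, Sum.elim_comp_inr]
  simp only [hb2def, hb1def] at h1 h2
  simp only [Matrix.mulVec_add, Matrix.mulVec_sub, Matrix.mulVec_smul,
    Matrix.smul_mulVec, Matrix.one_mulVec,
    dotProduct_add, dotProduct_sub, dotProduct_smul, dotProduct_neg,
    smul_eq_mul, smul_sub] at h1 h2 ⊢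
  linarith [h1, h2]
end
end

section
/- (Lemma: quadratic bound) Let uᵏ ∈ ℝⁿ × ℝᵐ, let ũᵏ be a prediction from uᵏ, and let u^{k+1} = uᵏ − M(uᵏ − ũᵏ). Then for every u ∈ Ω, θ(u) − θ(ũᵏ) + (u − ũᵏ)ᵀF(u) ≥ (1/2)(‖u − u^{k+1}‖²_H − ‖u − uᵏ‖²_H) + (1/2)‖uᵏ − ũᵏ‖²_G. -/
open Matrix

noncomputable section

lemma dot_self_nonneg' {k : Type*} [Fintype k] (v : k → ℝ) : 0 ≤ v ⬝ᵥ v :=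
  Finset.sum_nonneg fun i _ => mul_self_nonneg _

lemma dot_tr {p q : Type*} [Fintype p] [Fintype q] (N : Matrix p q ℝ)
    (v : q → ℝ) (w : p → ℝ) : v ⬝ᵥ Nᵀ *ᵥ w = w ⬝ᵥ N *ᵥ v := by
  rw [Matrix.mulVec_transpose, dotProduct_comm, ← Matrix.dotProduct_mulVec]

lemma limit_aux (h K : ℝ) (hK : 0 ≤ K)
    (H : ∀ t : ℝ, 0 < t → t ≤ 1 → 0 ≤ t * h + t ^ 2 * K) : 0 ≤ h := by
  by_contra hneg
  push_neg at hneg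
  set t : ℝ := min 1 (-h / (2 * K + 1)) with ht
  have h1 : 0 < -h / (2 * K + 1) := div_pos (by linarith) (by linarith)
  have ht0 : 0 < t := lt_min one_pos h1
  have ht1 : t ≤ 1 := min_le_left _ _
  have ht2 : t ≤ -h / (2 * K + 1) := min_le_right _ _
  have h2 : t * (2 * K + 1) ≤ -h := (le_div_iff₀ (by linarith)).mp ht2
  have h3 := H t ht0 ht1
  nlinarith [mul_le_mul_of_nonneg_left h2 ht0.le, mul_pos ht0 ht0]

lemma proxVI {n : ℕ} {X : Set (Fin n → ℝ)} (hX : Convex ℝ X)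
    {f : (Fin n → ℝ) → ℝ} (hf : ConvexOn ℝ Set.univ f)
    (c x0 : Fin n → ℝ) {ρ : ℝ} (hρ : 0 < ρ)
    {xt : Fin n → ℝ} (hxt : xt ∈ X)
    (hmin : ∀ x ∈ X,
      f xt + c ⬝ᵥ xt + ρ / 2 * ((xt - x0) ⬝ᵥ (xt - x0)) ≤
        f x + c ⬝ᵥ x + ρ / 2 * ((x - x0) ⬝ᵥ (x - x0))) :
    ∀ x ∈ X, 0 ≤ f x - f xt + (x - xt) ⬝ᵥ (c + ρ • (xt - x0)) := by
  intro x hx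
  apply limit_aux _ (ρ / 2 * ((x - xt) ⬝ᵥ (x - xt)))
    (mul_nonneg (by linarith) (dot_self_nonneg' _))
  intro t ht0 ht1
  have hmem : (1 - t) • xt + t • x ∈ X := hX hxt hx (by linarith) ht0.le (by ring)
  have hcv : f ((1 - t) • xt + t • x) ≤ (1 - t) * f xt + t * f x :=
    hf.2 (Set.mem_univ _) (Set.mem_univ _) (by linarith) ht0.le (by ring)
  have hm := hmin _ hmem
  have e0 : (1 - t) • xt + t • x = xt + t • (x - xt) := by module
  rw [e0] at hm hcv
  have h1 : xt + t • (x - xt) - x0 = (xt - x0) + t • (x - xt) := by module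
  have e1 : (xt + t • (x - xt) - x0) ⬝ᵥ (xt + t • (x - xt) - x0) =
      (xt - x0) ⬝ᵥ (xt - x0) + 2 * t * ((xt - x0) ⬝ᵥ (x - xt)) +
        t ^ 2 * ((x - xt) ⬝ᵥ (x - xt)) := by
    rw [h1]
    simp only [add_dotProduct, dotProduct_add, smul_dotProduct,
      dotProduct_smul, smul_eq_mul]
    rw [dotProduct_comm (x - xt) (xt - x0)]
    ring
  have e2 : c ⬝ᵥ (xt + t • (x - xt)) = c ⬝ᵥ xt + t * (c ⬝ᵥ (x - xt)) := by
    simp [dotProduct_add, dotProduct_smul]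
  have e3 : (x - xt) ⬝ᵥ (c + ρ • (xt - x0)) =
      c ⬝ᵥ (x - xt) + ρ * ((xt - x0) ⬝ᵥ (x - xt)) := by
    simp only [dotProduct_add, dotProduct_smul, smul_eq_mul]
    rw [dotProduct_comm (x - xt) c, dotProduct_comm (x - xt) (xt - x0)]
  rw [e1, e2] at hm
  rw [e3]
  nlinarith [hm, hcv]

variable {n m : ℕ} (A : Matrix (Fin m) (Fin n) ℝ) (r s α : ℝ)

lemma fb_congr {l o p q R : Type*} {A A' : Matrix l p R} {B B' : Matrix l q R}
    {C C' : Matrix o p R} {D D' : Matrix o q R}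
    (h1 : A = A') (h2 : B = B') (h3 : C = C') (h4 : D = D') :
    Matrix.fromBlocks A B C D = Matrix.fromBlocks A' B' C' D' := by
  subst h1; subst h2; subst h3; subst h4; rfl

lemma hQM (hs : s ≠ 0) : pdH A r s α * pdM A s α = pdQ A r s α := by
  unfold pdH pdM pdQ
  rw [Matrix.fromBlocks_multiply]
  have hc : s * ((1 - α) / s) = 1 - α := by field_simp
  refine fb_congr ?_ ?_ ?_ ?_
  · rw [Matrix.mul_one, Matrix.mul_neg, Matrix.mul_smul]
    abel
  · rw [Matrix.mul_zero, Matrix.mul_one, zero_add]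
  · rw [Matrix.mul_one, Matrix.mul_neg, Matrix.smul_mul, Matrix.one_mul, smul_smul, hc]
    module
  · rw [Matrix.mul_zero, Matrix.mul_one, zero_add]

lemma hHs : (pdH A r s α)ᵀ = pdH A r s α := by
  unfold pdH
  simp [Matrix.fromBlocks_transpose, Matrix.transpose_add, Matrix.transpose_smul,
    Matrix.transpose_mul, Matrix.transpose_one, Matrix.transpose_transpose]

lemma hGm (hs : s ≠ 0) : (pdM A s α)ᵀ * pdQ A r s α + pdG A r s α =
    pdQ A r s α + (pdQ A r s α)ᵀ := by
  unfold pdM pdQ pdG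
  rw [Matrix.fromBlocks_transpose, Matrix.fromBlocks_transpose, Matrix.fromBlocks_multiply,
    Matrix.fromBlocks_add, Matrix.fromBlocks_add]
  have hc : (1 - α) / s * s = 1 - α := by field_simp
  simp only [Matrix.transpose_one, Matrix.transpose_zero, Matrix.transpose_neg,
    Matrix.transpose_smul, Matrix.transpose_transpose, Matrix.one_mul, Matrix.zero_mul,
    Matrix.mul_one, zero_add, Matrix.neg_mul, Matrix.smul_mul, Matrix.mul_smul, smul_smul]
  refine fb_congr ?_ ?_ ?_ ?_
  · rw [smul_neg, smul_smul, show α * ((1 - α) / s) = α * (1 - α) / s by ring]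
    module
  · rw [smul_neg, smul_smul, show s * ((1 - α) / s) = 1 - α by field_simp]
    module
  · rw [smul_zero]; abel
  · rfl


/-- Quadratic bound lemma (3.13). -/
theorem stmt_7 (n m : ℕ) (hn : 0 < n) (hm : 0 < m)
    (X : Set (Fin n → ℝ)) (Y : Set (Fin m → ℝ))
    (hXne : X.Nonempty) (hXcl : IsClosed X) (hXcv : Convex ℝ X)
    (hYne : Y.Nonempty) (hYcl : IsClosed Y) (hYcv : Convex ℝ Y)
    (f : (Fin n → ℝ) → ℝ) (g : (Fin m → ℝ) → ℝ)
    (hf : ConvexOn ℝ Set.univ f) (hg : ConvexOn ℝ Set.univ g)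
    (A : Matrix (Fin m) (Fin n) ℝ) (r s α : ℝ) (hr : 0 < r) (hs : 0 < s)
    (uk ut uk1 : PDVec n m)
    (hpred : IsPrediction X Y f g A r s α uk ut)
    (hcorr : pdToVec uk1 = pdToVec uk - (pdM A s α).mulVec (pdToVec uk - pdToVec ut)) :
    ∀ u : PDVec n m, u.1 ∈ X → u.2 ∈ Y →
      pdTheta f g u - pdTheta f g ut + (pdToVec u - pdToVec ut) ⬝ᵥ pdToVec (pdF A u) ≥
        1 / 2 * (pdNormSq (pdH A r s α) (pdToVec u - pdToVec uk1) -
            pdNormSq (pdH A r s α) (pdToVec u - pdToVec uk)) +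
          1 / 2 * pdNormSq (pdG A r s α) (pdToVec uk - pdToVec ut) := by

  intro u hxX hyY
  obtain ⟨hx1X, hxmin, hx2Y, hymin⟩ := hpred
  have hs0 : s ≠ 0 := ne_of_gt hs
  -- prediction variational inequalities
  have hdot : ∀ z : Fin n → ℝ, (-(Aᵀ *ᵥ uk.2)) ⬝ᵥ z = -(uk.2 ⬝ᵥ A *ᵥ z) := by
    intro z
    rw [neg_dotProduct, dotProduct_comm, dot_tr]
  have hxVI := proxVI hXcv hf (-(Aᵀ *ᵥ uk.2)) uk.1 hr hx1X
    (fun z hz => by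
      rw [hdot, hdot]
      have := hxmin z hz
      linarith) u.1 hxX
  have hyVI := proxVI hYcv hg (A *ᵥ (ut.1 + α • (ut.1 - uk.1))) uk.2 hs hx2Y
    (fun z hz => by
      rw [dotProduct_comm (A *ᵥ (ut.1 + α • (ut.1 - uk.1))) ut.2,
        dotProduct_comm (A *ᵥ (ut.1 + α • (ut.1 - uk.1))) z]
      have := hymin z hz
      linarith) u.2 hyY
  -- abbreviations
  set av := pdToVec u with hav
  set kv := pdToVec uk with hkv
  set tv := pdToVec ut with htv
  -- Step II : quadratic identity
  have hsymH : ∀ v w : Fin n ⊕ Fin m → ℝ,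
      v ⬝ᵥ (pdH A r s α) *ᵥ w = w ⬝ᵥ (pdH A r s α) *ᵥ v := by
    intro v w
    conv_lhs => rw [← hHs A r s α]
    rw [dot_tr]
  have h1 : av - pdToVec uk1 = (av - kv) + (pdM A s α) *ᵥ (kv - tv) := by
    rw [hcorr]; abel
  have e_norm1 : pdNormSq (pdH A r s α) (av - pdToVec uk1) =
      (av - kv) ⬝ᵥ (pdH A r s α) *ᵥ (av - kv) +
        2 * ((av - kv) ⬝ᵥ (pdH A r s α) *ᵥ ((pdM A s α) *ᵥ (kv - tv))) +
        ((pdM A s α) *ᵥ (kv - tv)) ⬝ᵥ (pdH A r s α) *ᵥ ((pdM A s α) *ᵥ (kv - tv)) := by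
    show (av - pdToVec uk1) ⬝ᵥ (pdH A r s α) *ᵥ (av - pdToVec uk1) = _
    rw [h1, Matrix.mulVec_add, dotProduct_add, add_dotProduct,
      add_dotProduct, hsymH ((pdM A s α) *ᵥ (kv - tv)) (av - kv)]
    ring
  have e_q : ((pdM A s α) *ᵥ (kv - tv)) ⬝ᵥ (pdH A r s α) *ᵥ ((pdM A s α) *ᵥ (kv - tv)) =
      (kv - tv) ⬝ᵥ ((pdM A s α)ᵀ * pdQ A r s α) *ᵥ (kv - tv) := by
    rw [Matrix.mulVec_mulVec, hQM A r s α hs0, dotProduct_comm,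
      ← Matrix.mulVec_mulVec, ← dot_tr (pdM A s α) (kv - tv) (pdQ A r s α *ᵥ (kv - tv)),
      Matrix.mulVec_mulVec]
  have e_G : pdNormSq (pdG A r s α) (kv - tv) =
      2 * ((kv - tv) ⬝ᵥ (pdQ A r s α) *ᵥ (kv - tv)) -
        (kv - tv) ⬝ᵥ ((pdM A s α)ᵀ * pdQ A r s α) *ᵥ (kv - tv) := by
    have h2 := congrArg (fun B : Matrix (Fin n ⊕ Fin m) (Fin n ⊕ Fin m) ℝ =>
      (kv - tv) ⬝ᵥ B *ᵥ (kv - tv)) (hGm A r s α hs0)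
    simp only [Matrix.add_mulVec, dotProduct_add] at h2
    have h3 : (kv - tv) ⬝ᵥ (pdQ A r s α)ᵀ *ᵥ (kv - tv) =
        (kv - tv) ⬝ᵥ (pdQ A r s α) *ᵥ (kv - tv) := dot_tr _ _ _
    show (kv - tv) ⬝ᵥ (pdG A r s α) *ᵥ (kv - tv) = _
    linarith [h2, h3]
  have e_lhs : (av - tv) ⬝ᵥ (pdQ A r s α) *ᵥ (kv - tv) =
      (av - kv) ⬝ᵥ (pdH A r s α) *ᵥ ((pdM A s α) *ᵥ (kv - tv)) +
        (kv - tv) ⬝ᵥ (pdQ A r s α) *ᵥ (kv - tv) := by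
    have h4 : av - tv = (av - kv) + (kv - tv) := by abel
    rw [h4, add_dotProduct, Matrix.mulVec_mulVec, hQM A r s α hs0]
  have hII : (av - tv) ⬝ᵥ (pdQ A r s α) *ᵥ (kv - tv) =
      1 / 2 * (pdNormSq (pdH A r s α) (av - pdToVec uk1) -
          pdNormSq (pdH A r s α) (av - kv)) +
        1 / 2 * pdNormSq (pdG A r s α) (kv - tv) := by
    have e_norm2 : pdNormSq (pdH A r s α) (av - kv) =
        (av - kv) ⬝ᵥ (pdH A r s α) *ᵥ (av - kv) := rfl
    rw [e_lhs, e_norm1, e_norm2, e_G, e_q]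
    ring
  rw [ge_iff_le, ← hII]
  -- Step I : VI inequality, componentwise
  have hsub1 : av - tv = Sum.elim (u.1 - ut.1) (u.2 - ut.2) := by
    funext i; cases i <;> simp [hav, htv, pdToVec]
  have hsub2 : kv - tv = Sum.elim (uk.1 - ut.1) (uk.2 - ut.2) := by
    funext i; cases i <;> simp [hkv, htv, pdToVec]
  have hFu : pdToVec (pdF A u) = Sum.elim (-(Aᵀ *ᵥ u.2)) (A *ᵥ u.1) := rfl
  rw [hsub1, hsub2, hFu, pdQ, Matrix.fromBlocks_mulVec]
  simp only [Sum.elim_comp_inl, Sum.elim_comp_inr, Matrix.smul_mulVec,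
    Matrix.one_mulVec, sumElim_dotProduct_sumElim, pdTheta]
  simp only [dotProduct_add, add_dotProduct, dotProduct_sub,
    sub_dotProduct, dotProduct_smul, smul_dotProduct,
    dotProduct_neg, neg_dotProduct, Matrix.mulVec_add, Matrix.mulVec_sub,
    Matrix.mulVec_smul, dot_tr A, smul_eq_mul] at hxVI hyVI ⊢
  have c1 : ut.1 ⬝ᵥ u.1 = u.1 ⬝ᵥ ut.1 := dotProduct_comm _ _
  have c2 : uk.1 ⬝ᵥ u.1 = u.1 ⬝ᵥ uk.1 := dotProduct_comm _ _
  have c3 : uk.1 ⬝ᵥ ut.1 = ut.1 ⬝ᵥ uk.1 := dotProduct_comm _ _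
  have c4 : ut.2 ⬝ᵥ u.2 = u.2 ⬝ᵥ ut.2 := dotProduct_comm _ _
  have c5 : uk.2 ⬝ᵥ u.2 = u.2 ⬝ᵥ uk.2 := dotProduct_comm _ _
  have c6 : uk.2 ⬝ᵥ ut.2 = ut.2 ⬝ᵥ uk.2 := dotProduct_comm _ _
  linarith [hxVI, hyVI, c1, c2, c3, c4, c5, c6]
end
end

section
/- (Ergodic O(1/N) rate) Assume r·s > (1−α+α²)·λmax(AᵀA), where λmax(AᵀA) is the largest eigenvalue of AᵀA. Let u⁰ ∈ ℝⁿ × ℝᵐ and let {uᵏ}, {ũᵏ} be sequences such that for every k ≥ 0, ũᵏ is a prediction from uᵏ and u^{k+1} = uᵏ − M(uᵏ − ũᵏ). For an integer N ≥ 0 set ū_N = (1/(N+1)) Σ_{k=0}^{N} ũᵏ. Then ū_N ∈ Ω and for every u ∈ Ω, θ(ū_N) − θ(u) + (ū_N − u)ᵀF(u) ≤ ‖u − u⁰‖²_H / (2(N+1)). -/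
open Matrix

noncomputable section

lemma dot_transpose' {n m : ℕ} (A : Matrix (Fin m) (Fin n) ℝ) (p : Fin n → ℝ) (b : Fin m → ℝ) :
    p ⬝ᵥ Aᵀ.mulVec b = A.mulVec p ⬝ᵥ b := by
  rw [Matrix.dotProduct_mulVec, Matrix.vecMul_transpose]

/-- quadratic form of the block matrix `H`. -/
def Hq {n m : ℕ} (A : Matrix (Fin m) (Fin n) ℝ) (r s α : ℝ) (p : Fin n → ℝ) (q : Fin m → ℝ) : ℝ :=
  r * (p ⬝ᵥ p) + (1-α)/s * (A.mulVec p ⬝ᵥ A.mulVec p) + 2*(A.mulVec p ⬝ᵥ q) + s*(q ⬝ᵥ q)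

/-- quadratic form of the block matrix `G`. -/
def Gq {n m : ℕ} (A : Matrix (Fin m) (Fin n) ℝ) (r s α : ℝ) (a : Fin n → ℝ) (b : Fin m → ℝ) : ℝ :=
  r * (a ⬝ᵥ a) + α*(1-α)/s * (A.mulVec a ⬝ᵥ A.mulVec a) + 2*(A.mulVec a ⬝ᵥ b) + s*(b ⬝ᵥ b)

lemma keyIdentity' {n m : ℕ} (A : Matrix (Fin m) (Fin n) ℝ) (r s α : ℝ) (hs : s ≠ 0)
    (p a : Fin n → ℝ) (q b : Fin m → ℝ) :
    (p ⬝ᵥ (r • a + Aᵀ.mulVec b)) + α * (A.mulVec a ⬝ᵥ q) + s * (q ⬝ᵥ b)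
      = (Hq A r s α p (q - ((1-α)/s) • A.mulVec a) - Hq A r s α (p - a) (q - b)) / 2
        + (Gq A r s α a b) / 2 := by
  simp only [Hq, Gq, dot_transpose', dotProduct_add, add_dotProduct, dotProduct_sub,
    sub_dotProduct, dotProduct_smul, smul_dotProduct, Matrix.mulVec_sub, Matrix.mulVec_smul,
    smul_eq_mul]
  rw [dotProduct_comm q (A.mulVec a)]
  field_simp
  rw [dotProduct_comm a p, dotProduct_comm b q, dotProduct_comm (A.mulVec a) (A.mulVec p)]
  ring

lemma ident2' {n m : ℕ} (A : Matrix (Fin m) (Fin n) ℝ) (r s α : ℝ)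
    (vx xt xk : Fin n → ℝ) (vy yt yk : Fin m → ℝ) :
    (vx - xt) ⬝ᵥ (-(Aᵀ.mulVec vy)) + (vy - yt) ⬝ᵥ (A.mulVec vx)
      - (vx - xt) ⬝ᵥ ((-(Aᵀ.mulVec yk)) + r • (xt - xk))
      - (vy - yt) ⬝ᵥ (A.mulVec (xt + α • (xt - xk)) + s • (yt - yk))
    = (vx - xt) ⬝ᵥ (r • (xk - xt) + Aᵀ.mulVec (yk - yt))
        + α * (A.mulVec (xk - xt) ⬝ᵥ (vy - yt)) + s * ((vy - yt) ⬝ᵥ (yk - yt)) := by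
  simp only [dot_transpose', dotProduct_add, add_dotProduct, dotProduct_sub, sub_dotProduct,
    dotProduct_smul, smul_dotProduct, Matrix.mulVec_sub, Matrix.mulVec_add, Matrix.mulVec_smul,
    smul_eq_mul, dotProduct_neg, neg_dotProduct]
  rw [dotProduct_comm vy (A.mulVec vx), dotProduct_comm yt (A.mulVec vx),
    dotProduct_comm vy (A.mulVec xt), dotProduct_comm yt (A.mulVec xt),
    dotProduct_comm vy (A.mulVec xk), dotProduct_comm yt (A.mulVec xk)]
  ring

lemma quad_le_eig' {d : ℕ} (S : Matrix (Fin d) (Fin d) ℝ) (hS : S.IsHermitian) (x : Fin d → ℝ) :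
    x ⬝ᵥ S.mulVec x ≤ (⨆ i, hS.eigenvalues i) * (x ⬝ᵥ x) := by
  rcases Nat.eq_zero_or_pos d with hd | hd
  · subst hd; simp [dotProduct]
  haveI : Nonempty (Fin d) := Fin.pos_iff_nonempty.mp hd
  set U : Matrix (Fin d) (Fin d) ℝ := (hS.eigenvectorUnitary : Matrix (Fin d) (Fin d) ℝ) with hU
  have hsU : star U = Uᵀ := by ext i j; simp [Matrix.star_apply]
  have hUU : U * Uᵀ = 1 := by
    rw [← hsU]; exact Matrix.mem_unitaryGroup_iff.mp hS.eigenvectorUnitary.2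
  set y : Fin d → ℝ := Uᵀ.mulVec x with hy
  have hxy : x ⬝ᵥ x = y ⬝ᵥ y := by
    rw [hy, dot_transpose', Matrix.mulVec_mulVec, hUU, Matrix.one_mulVec]
  have hquad : x ⬝ᵥ S.mulVec x = ∑ i, hS.eigenvalues i * (y i * y i) := by
    conv_lhs => rw [hS.spectral_theorem, Unitary.conjStarAlgAut_apply, hsU]
    rw [← Matrix.mulVec_mulVec, ← Matrix.mulVec_mulVec]
    rw [Matrix.dotProduct_mulVec, ← Matrix.mulVec_transpose, ← hy]
    simp [dotProduct, Matrix.mulVec_diagonal, mul_comm, mul_assoc, mul_left_comm]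
  rw [hquad, hxy]
  have hyy : y ⬝ᵥ y = ∑ i, y i * y i := rfl
  rw [hyy, Finset.mul_sum]
  refine Finset.sum_le_sum fun i _ => ?_
  exact mul_le_mul_of_nonneg_right
    (le_ciSup (Set.Finite.bddAbove (Set.finite_range _)) i) (mul_self_nonneg _)

/-- First-order optimality from minimality of `x ↦ f x + lin ⬝ᵥ x + ρ/2 ‖x-w‖²` over convex `X`. -/
lemma foc' {ι : Type*} [Fintype ι] {X : Set (ι → ℝ)} (hX : Convex ℝ X)
    {f : (ι → ℝ) → ℝ} (hf : ConvexOn ℝ Set.univ f) (lin w : ι → ℝ) {ρ : ℝ} (hρ : 0 ≤ ρ)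
    {z : ι → ℝ} (hz : z ∈ X)
    (hmin : ∀ x ∈ X, f z + lin ⬝ᵥ z + ρ/2 * ((z-w) ⬝ᵥ (z-w)) ≤
      f x + lin ⬝ᵥ x + ρ/2 * ((x-w) ⬝ᵥ (x-w)))
    {x : ι → ℝ} (hx : x ∈ X) :
    0 ≤ f x - f z + (x - z) ⬝ᵥ (lin + ρ • (z - w)) := by
  set E := f x - f z + (x - z) ⬝ᵥ (lin + ρ • (z - w)) with hE
  set c := ρ/2 * ((x-z) ⬝ᵥ (x-z)) with hc
  have hc0 : 0 ≤ c := mul_nonneg (by linarith) (dot_self_nonneg' _)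
  have key : ∀ t : ℝ, 0 < t → t ≤ 1 → 0 ≤ E + c * t := by
    intro t ht0 ht1
    have hzt : (1-t) • z + t • x ∈ X := hX hz hx (by linarith) (le_of_lt ht0) (by ring)
    have h1 := hmin _ hzt
    have h2 : f ((1-t) • z + t • x) ≤ (1-t) * f z + t * f x :=
      hf.2 (Set.mem_univ z) (Set.mem_univ x) (by linarith) (le_of_lt ht0) (by ring)
    have h3 : lin ⬝ᵥ ((1-t) • z + t • x) = lin ⬝ᵥ z + t * (lin ⬝ᵥ x - lin ⬝ᵥ z) := by
      simp [dotProduct_add, dotProduct_smul, smul_eq_mul]; ring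
    have h4 : ((1-t) • z + t • x - w) ⬝ᵥ ((1-t) • z + t • x - w)
        = (z - w) ⬝ᵥ (z - w) + 2*t*((x-z) ⬝ᵥ (z-w)) + t^2*((x-z) ⬝ᵥ (x-z)) := by
      have hv : (1-t) • z + t • x - w = (z - w) + t • (x - z) := by
        funext i; simp [smul_eq_mul]; ring
      rw [hv]
      simp only [dotProduct_add, add_dotProduct, dotProduct_smul, smul_dotProduct, smul_eq_mul]
      rw [dotProduct_comm (x-z) (z-w)]
      ring
    have h5 : (x - z) ⬝ᵥ (lin + ρ • (z - w))
        = (lin ⬝ᵥ x - lin ⬝ᵥ z) + ρ * ((x-z) ⬝ᵥ (z-w)) := by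
      simp only [dotProduct_add, sub_dotProduct, dotProduct_smul, smul_eq_mul]
      rw [dotProduct_comm x lin, dotProduct_comm z lin]
    rw [h3, h4] at h1
    have h6 : 0 ≤ t * (E + c * t) := by
      rw [hE, hc, h5]
      nlinarith [h1, h2]
    nlinarith [h6, ht0]
  by_contra hcon
  push_neg at hcon
  rcases eq_or_lt_of_le hc0 with hceq | hclt
  · have := key 1 one_pos le_rfl
    rw [← hceq] at this; linarith
  · have ht0 : 0 < min 1 (-E/(2*c)) := lt_min one_pos (div_pos (by linarith) (by linarith))
    have := key _ ht0 (min_le_left _ _)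
    have h7 : c * min 1 (-E/(2*c)) ≤ c * (-E/(2*c)) :=
      mul_le_mul_of_nonneg_left (min_le_right _ _) hc0
    have h8 : c * (-E/(2*c)) = -E/2 := by field_simp
    linarith

lemma sub_pdToVec' {n m : ℕ} (a b : PDVec n m) :
    pdToVec a - pdToVec b = Sum.elim (a.1 - b.1) (a.2 - b.2) := by
  funext i; cases i <;> simp [pdToVec]

lemma pdNormSq_eq_Hq' {n m : ℕ} (A : Matrix (Fin m) (Fin n) ℝ) (r s α : ℝ)
    (p : Fin n → ℝ) (q : Fin m → ℝ) :
    pdNormSq (pdH A r s α) (Sum.elim p q) = Hq A r s α p q := by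
  rw [pdNormSq, pdH, Matrix.fromBlocks_mulVec]
  simp only [Sum.elim_comp_inl, Sum.elim_comp_inr]
  rw [sumElim_dotProduct_sumElim]
  simp only [Matrix.add_mulVec, Matrix.smul_mulVec, Matrix.one_mulVec,
    ← Matrix.mulVec_mulVec, dotProduct_add, dotProduct_smul, dot_transpose', smul_eq_mul]
  rw [dotProduct_comm q (A.mulVec p), Hq]
  ring

lemma corr_eq' {n m : ℕ} (A : Matrix (Fin m) (Fin n) ℝ) (s α : ℝ) (uk utk un : PDVec n m)
    (h : pdToVec un = pdToVec uk - (pdM A s α).mulVec (pdToVec uk - pdToVec utk)) :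
    un.1 = utk.1 ∧ un.2 = utk.2 + ((1-α)/s) • A.mulVec (uk.1 - utk.1) := by
  rw [sub_pdToVec' uk utk, pdM, Matrix.fromBlocks_mulVec] at h
  simp only [Sum.elim_comp_inl, Sum.elim_comp_inr, Matrix.one_mulVec, Matrix.zero_mulVec,
    Matrix.neg_mulVec, Matrix.smul_mulVec, add_zero, zero_add] at h
  constructor
  · funext i
    have h1 := congrFun h (Sum.inl i)
    simp [pdToVec] at h1
    simpa using h1
  · funext j
    have h2 := congrFun h (Sum.inr j)
    simp [pdToVec] at h2
    rw [h2]
    simp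
    ring

lemma sum_dotProduct'' {ι k : Type*} [Fintype k] (t : Finset ι) (f : ι → (k → ℝ)) (v : k → ℝ) :
    (∑ i ∈ t, f i) ⬝ᵥ v = ∑ i ∈ t, f i ⬝ᵥ v := by
  classical
  induction t using Finset.induction with
  | empty => simp
  | insert a s h ih => rw [Finset.sum_insert h, Finset.sum_insert h, add_dotProduct, ih]

/-- Ergodic O(1/N) convergence rate. -/
theorem stmt_11 (n m : ℕ) (hn : 0 < n) (hm : 0 < m)
    (X : Set (Fin n → ℝ)) (Y : Set (Fin m → ℝ))
    (hXne : X.Nonempty) (hXcl : IsClosed X) (hXcv : Convex ℝ X)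
    (hYne : Y.Nonempty) (hYcl : IsClosed Y) (hYcv : Convex ℝ Y)
    (f : (Fin n → ℝ) → ℝ) (g : (Fin m → ℝ) → ℝ)
    (hf : ConvexOn ℝ Set.univ f) (hg : ConvexOn ℝ Set.univ g)
    (A : Matrix (Fin m) (Fin n) ℝ) (r s α : ℝ) (hr : 0 < r) (hs : 0 < s)
    (hA : (Aᵀ * A).IsHermitian)
    (hrs : (1 - α + α ^ 2) * (⨆ i, hA.eigenvalues i) < r * s)
    (u ut : ℕ → PDVec n m)
    (hpred : ∀ k, IsPrediction X Y f g A r s α (u k) (ut k))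
    (hcorr : ∀ k, pdToVec (u (k + 1)) =
      pdToVec (u k) - (pdM A s α).mulVec (pdToVec (u k) - pdToVec (ut k)))
    (N : ℕ) (ubar : PDVec n m)
    (hubar : ubar = (((N : ℝ) + 1)⁻¹) • ∑ k ∈ Finset.range (N + 1), ut k) :
    (ubar.1 ∈ X ∧ ubar.2 ∈ Y) ∧
      ∀ v : PDVec n m, v.1 ∈ X → v.2 ∈ Y →
        pdTheta f g ubar - pdTheta f g v +
            (pdToVec ubar - pdToVec v) ⬝ᵥ pdToVec (pdF A v) ≤
          pdNormSq (pdH A r s α) (pdToVec v - pdToVec (u 0)) / (2 * ((N : ℝ) + 1)) := by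
  haveI hne : Nonempty (Fin n) := Fin.pos_iff_nonempty.mp hn
  set lam := ⨆ i, hA.eigenvalues i with hlamdef
  have hlam0 : 0 ≤ lam := by
    refine le_trans (Matrix.PosSemidef.eigenvalues_nonneg ?_ (Classical.arbitrary _))
      (le_ciSup (Set.Finite.bddAbove (Set.finite_range _)) _)
    have h := Matrix.posSemidef_conjTranspose_mul_self A
    rwa [Matrix.conjTranspose_eq_transpose_of_trivial] at h
  have hbound : ∀ p : Fin n → ℝ, A.mulVec p ⬝ᵥ A.mulVec p ≤ lam * (p ⬝ᵥ p) := by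
    intro p
    have h := quad_le_eig' (Aᵀ * A) hA p
    rwa [← Matrix.mulVec_mulVec, dot_transpose'] at h
  have hs' : s ≠ 0 := ne_of_gt hs
  -- nonnegativity of the quadratic forms
  have amgm : ∀ (p : Fin n → ℝ) (q : Fin m → ℝ),
      0 ≤ A.mulVec p ⬝ᵥ A.mulVec p + 2*s*(A.mulVec p ⬝ᵥ q) + s^2*(q ⬝ᵥ q) := by
    intro p q
    have h := dot_self_nonneg' (A.mulVec p + s • q)
    simp only [dotProduct_add, add_dotProduct, dotProduct_smul, smul_dotProduct,
      smul_eq_mul] at h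
    rw [dotProduct_comm q (A.mulVec p)] at h
    nlinarith [h]
  have Hq_nonneg : ∀ (p : Fin n → ℝ) (q : Fin m → ℝ), 0 ≤ Hq A r s α p q := by
    intro p q
    have h := amgm p q
    have hb := hbound p
    have hP := dot_self_nonneg' p
    have hX := dot_self_nonneg' (A.mulVec p)
    have hQ := dot_self_nonneg' q
    have hHs : s * Hq A r s α p q = r*s*(p ⬝ᵥ p) + (1-α)*(A.mulVec p ⬝ᵥ A.mulVec p)
        + 2*s*(A.mulVec p ⬝ᵥ q) + s^2*(q ⬝ᵥ q) := by
      rw [Hq]; field_simp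
    have h2 : 0 ≤ s * Hq A r s α p q := by
      rw [hHs]
      rcases le_or_gt 0 α with hα | hα
      · have p1 : 0 ≤ (r*s - (1 - α + α^2)*lam) * (p ⬝ᵥ p) :=
          mul_nonneg (by linarith) hP
        have p2 : 0 ≤ (1-α)^2 * lam * (p ⬝ᵥ p) :=
          mul_nonneg (mul_nonneg (sq_nonneg _) hlam0) hP
        have p3 : 0 ≤ α * (lam * (p ⬝ᵥ p) - A.mulVec p ⬝ᵥ A.mulVec p) :=
          mul_nonneg hα (by linarith)
        nlinarith [h, p1, p2, p3]
      · have p1 : 0 ≤ r*s*(p ⬝ᵥ p) := mul_nonneg (mul_pos hr hs).le hP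
        have p2 : 0 ≤ -α * (A.mulVec p ⬝ᵥ A.mulVec p) := mul_nonneg (by linarith) hX
        nlinarith [h, p1, p2]
    nlinarith [h2, hs]
  have Gq_nonneg : ∀ (a : Fin n → ℝ) (b : Fin m → ℝ), 0 ≤ Gq A r s α a b := by
    intro a b
    have h := amgm a b
    have hb := hbound a
    have hP := dot_self_nonneg' a
    have hX := dot_self_nonneg' (A.mulVec a)
    have hK : (0:ℝ) ≤ 1 - α + α^2 := by nlinarith [sq_nonneg (2*α - 1)]
    have hGs : s * Gq A r s α a b = r*s*(a ⬝ᵥ a) + α*(1-α)*(A.mulVec a ⬝ᵥ A.mulVec a)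
        + 2*s*(A.mulVec a ⬝ᵥ b) + s^2*(b ⬝ᵥ b) := by
      rw [Gq]; field_simp
    have h2 : 0 ≤ s * Gq A r s α a b := by
      rw [hGs]
      have p1 : 0 ≤ (r*s - (1 - α + α^2)*lam) * (a ⬝ᵥ a) := mul_nonneg (by linarith) hP
      have p2 : 0 ≤ (1 - α + α^2) * (lam * (a ⬝ᵥ a) - A.mulVec a ⬝ᵥ A.mulVec a) :=
        mul_nonneg hK (by linarith)
      nlinarith [h, p1, p2]
    nlinarith [h2, hs]
  -- the per-iteration inequality
  have step : ∀ k, ∀ vx ∈ X, ∀ vy ∈ Y,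
      f (ut k).1 + g (ut k).2 - (f vx + g vy)
        + (((ut k).1 - vx) ⬝ᵥ (-(Aᵀ.mulVec vy)) + ((ut k).2 - vy) ⬝ᵥ (A.mulVec vx))
      ≤ (Hq A r s α (vx - (u k).1) (vy - (u k).2)
          - Hq A r s α (vx - (u (k+1)).1) (vy - (u (k+1)).2)) / 2 := by
    intro k vx hvx vy hvy
    obtain ⟨hx1, hmin1, hy1, hmin2⟩ := hpred k
    obtain ⟨hcf, hcs⟩ := corr_eq' A s α (u k) (ut k) (u (k+1)) (hcorr k)
    have hconv : ∀ x : Fin n → ℝ, (-(Aᵀ.mulVec (u k).2)) ⬝ᵥ x = -((u k).2 ⬝ᵥ A.mulVec x) := by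
      intro x
      rw [neg_dotProduct, dotProduct_comm, dot_transpose', dotProduct_comm]
    have hminx : ∀ x ∈ X, f (ut k).1 + (-(Aᵀ.mulVec (u k).2)) ⬝ᵥ (ut k).1
        + r/2 * (((ut k).1 - (u k).1) ⬝ᵥ ((ut k).1 - (u k).1)) ≤
        f x + (-(Aᵀ.mulVec (u k).2)) ⬝ᵥ x + r/2 * ((x - (u k).1) ⬝ᵥ (x - (u k).1)) := by
      intro x hx
      rw [hconv, hconv]
      have := hmin1 x hx
      linarith
    have focx := foc' hXcv hf (-(Aᵀ.mulVec (u k).2)) (u k).1 hr.le hx1 hminx hvx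
    set lin2 := A.mulVec ((ut k).1 + α • ((ut k).1 - (u k).1)) with hlin2
    have hminy : ∀ y ∈ Y, g (ut k).2 + lin2 ⬝ᵥ (ut k).2
        + s/2 * (((ut k).2 - (u k).2) ⬝ᵥ ((ut k).2 - (u k).2)) ≤
        g y + lin2 ⬝ᵥ y + s/2 * ((y - (u k).2) ⬝ᵥ (y - (u k).2)) := by
      intro y hy
      rw [dotProduct_comm lin2 (ut k).2, dotProduct_comm lin2 y]
      exact hmin2 y hy
    have focy := foc' hYcv hg lin2 (u k).2 hs.le hy1 hminy hvy
    have hid := ident2' A r s α vx (ut k).1 (u k).1 vy (ut k).2 (u k).2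
    have hkey := keyIdentity' A r s α hs' (vx - (ut k).1) ((u k).1 - (ut k).1)
      (vy - (ut k).2) ((u k).2 - (ut k).2)
    have hGnn := Gq_nonneg ((u k).1 - (ut k).1) ((u k).2 - (ut k).2)
    have hHnew : Hq A r s α (vx - (u (k+1)).1) (vy - (u (k+1)).2)
        = Hq A r s α (vx - (ut k).1)
            ((vy - (ut k).2) - ((1-α)/s) • A.mulVec ((u k).1 - (ut k).1)) := by
      rw [hcf, hcs, sub_add_eq_sub_sub]
    have hHold : Hq A r s α (vx - (u k).1) (vy - (u k).2)
        = Hq A r s α ((vx - (ut k).1) - ((u k).1 - (ut k).1))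
            ((vy - (ut k).2) - ((u k).2 - (ut k).2)) := by
      congr 1 <;> abel
    have hflip1 : ((ut k).1 - vx) ⬝ᵥ (-(Aᵀ.mulVec vy))
        = -((vx - (ut k).1) ⬝ᵥ (-(Aᵀ.mulVec vy))) := by
      rw [← neg_dotProduct, neg_sub]
    have hflip2 : ((ut k).2 - vy) ⬝ᵥ (A.mulVec vx)
        = -((vy - (ut k).2) ⬝ᵥ (A.mulVec vx)) := by
      rw [← neg_dotProduct, neg_sub]
    rw [hflip1, hflip2, hHnew, hHold]
    linarith [focx, focy, hid, hkey, hGnn]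
  -- assemble
  set w : ℝ := ((N:ℝ)+1)⁻¹ with hwdef
  have hNpos : (0:ℝ) < (N:ℝ) + 1 := by positivity
  have hw0 : 0 ≤ w := by positivity
  have hwsum : ∑ _k ∈ Finset.range (N+1), w = 1 := by
    rw [Finset.sum_const, Finset.card_range, nsmul_eq_mul, hwdef]
    push_cast
    field_simp
  have hubar1 : ubar.1 = ∑ k ∈ Finset.range (N+1), w • (ut k).1 := by
    rw [hubar, Prod.smul_fst, Prod.fst_sum, Finset.smul_sum]
  have hubar2 : ubar.2 = ∑ k ∈ Finset.range (N+1), w • (ut k).2 := by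
    rw [hubar, Prod.smul_snd, Prod.snd_sum, Finset.smul_sum]
  have hmemX : ubar.1 ∈ X := by
    rw [hubar1]
    exact hXcv.sum_mem (fun _ _ => hw0) hwsum (fun k _ => (hpred k).1)
  have hmemY : ubar.2 ∈ Y := by
    rw [hubar2]
    exact hYcv.sum_mem (fun _ _ => hw0) hwsum (fun k _ => (hpred k).2.2.1)
  refine ⟨⟨hmemX, hmemY⟩, ?_⟩
  intro v hv1 hv2
  have hjf : f ubar.1 ≤ ∑ k ∈ Finset.range (N+1), w * f (ut k).1 := by
    rw [hubar1]
    exact hf.map_sum_le (fun _ _ => hw0) hwsum (fun _ _ => Set.mem_univ _)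
  have hjg : g ubar.2 ≤ ∑ k ∈ Finset.range (N+1), w * g (ut k).2 := by
    rw [hubar2]
    exact hg.map_sum_le (fun _ _ => hw0) hwsum (fun _ _ => Set.mem_univ _)
  set F1 : Fin n → ℝ := -(Aᵀ.mulVec v.2) with hF1
  set F2 : Fin m → ℝ := A.mulVec v.1 with hF2
  set L : ℕ → ℝ := fun k => ((ut k).1 - v.1) ⬝ᵥ F1 + ((ut k).2 - v.2) ⬝ᵥ F2 with hL
  set D : ℕ → ℝ := fun k => Hq A r s α (v.1 - (u k).1) (v.2 - (u k).2) with hD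
  have hsum : ∑ k ∈ Finset.range (N+1),
      (f (ut k).1 + g (ut k).2 - (f v.1 + g v.2) + L k) ≤ D 0 / 2 := by
    have h1 : ∑ k ∈ Finset.range (N+1),
        (f (ut k).1 + g (ut k).2 - (f v.1 + g v.2) + L k)
        ≤ ∑ k ∈ Finset.range (N+1), (D k - D (k+1)) / 2 :=
      Finset.sum_le_sum fun k _ => step k v.1 hv1 v.2 hv2
    have h2 : ∑ k ∈ Finset.range (N+1), (D k - D (k+1)) / 2 = (D 0 - D (N+1)) / 2 := by
      rw [← Finset.sum_div, Finset.sum_range_sub']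
    have h3 : 0 ≤ D (N+1) := Hq_nonneg _ _
    linarith
  -- rewrite the goal
  have hgoal_dot : (pdToVec ubar - pdToVec v) ⬝ᵥ pdToVec (pdF A v)
      = (ubar.1 - v.1) ⬝ᵥ F1 + (ubar.2 - v.2) ⬝ᵥ F2 := by
    rw [sub_pdToVec']
    exact sumElim_dotProduct_sumElim _ _ _ _
  have hlin1 : (ubar.1 - v.1) ⬝ᵥ F1
      = ∑ k ∈ Finset.range (N+1), w * (((ut k).1 - v.1) ⬝ᵥ F1) := by
    rw [hubar1, sub_dotProduct, sum_dotProduct'']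
    simp only [smul_dotProduct, smul_eq_mul, sub_dotProduct, mul_sub]
    rw [Finset.sum_sub_distrib, ← Finset.sum_mul, hwsum, one_mul]
  have hlin2 : (ubar.2 - v.2) ⬝ᵥ F2
      = ∑ k ∈ Finset.range (N+1), w * (((ut k).2 - v.2) ⬝ᵥ F2) := by
    rw [hubar2, sub_dotProduct, sum_dotProduct'']
    simp only [smul_dotProduct, smul_eq_mul, sub_dotProduct, mul_sub]
    rw [Finset.sum_sub_distrib, ← Finset.sum_mul, hwsum, one_mul]
  have hRHS : pdNormSq (pdH A r s α) (pdToVec v - pdToVec (u 0)) = D 0 := by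
    rw [sub_pdToVec', pdNormSq_eq_Hq']
  have hwexp : ∑ k ∈ Finset.range (N+1),
      w * (f (ut k).1 + g (ut k).2 - (f v.1 + g v.2) + L k)
      = (∑ k ∈ Finset.range (N+1), w * f (ut k).1)
        + (∑ k ∈ Finset.range (N+1), w * g (ut k).2)
        - (f v.1 + g v.2)
        + ∑ k ∈ Finset.range (N+1), w * L k := by
    have he : ∀ k ∈ Finset.range (N+1),
        w * (f (ut k).1 + g (ut k).2 - (f v.1 + g v.2) + L k)
        = (w * f (ut k).1 + w * g (ut k).2 + w * L k) - w * (f v.1 + g v.2) := by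
      intro k _; ring
    rw [Finset.sum_congr rfl he, Finset.sum_sub_distrib, Finset.sum_add_distrib,
      Finset.sum_add_distrib, ← Finset.sum_mul, hwsum, one_mul]
    ring
  have hcomb : ∑ k ∈ Finset.range (N+1),
      w * (f (ut k).1 + g (ut k).2 - (f v.1 + g v.2) + L k) ≤ w * (D 0 / 2) := by
    rw [← Finset.mul_sum]
    exact mul_le_mul_of_nonneg_left hsum hw0
  have hfinal : w * (D 0 / 2) = D 0 / (2 * ((N:ℝ)+1)) := by
    rw [hwdef, inv_mul_eq_div, div_div]
  rw [pdTheta, pdTheta, hgoal_dot, hlin1, hlin2, hRHS]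
  have hLsum : (∑ k ∈ Finset.range (N+1), w * (((ut k).1 - v.1) ⬝ᵥ F1))
      + (∑ k ∈ Finset.range (N+1), w * (((ut k).2 - v.2) ⬝ᵥ F2))
      = ∑ k ∈ Finset.range (N+1), w * L k := by
    rw [← Finset.sum_add_distrib]
    refine Finset.sum_congr rfl fun k _ => ?_
    rw [hL]; ring
  linarith [hjf, hjg, hcomb, hwexp, hLsum, hfinal]
end
end

section
/- (Nonnegative cross term) Let uᵏ ∈ ℝⁿ × ℝᵐ, let ũᵏ be a prediction from uᵏ, let u^{k+1} = uᵏ − M(uᵏ − ũᵏ), and let ũ^{k+1} be a prediction from u^{k+1}. Then (ũᵏ − ũ^{k+1})ᵀ Q [ (uᵏ − ũᵏ) − (u^{k+1} − ũ^{k+1}) ] ≥ 0. -/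
open Matrix

noncomputable section

lemma aux_pos_limit {L C : ℝ} (hC : 0 ≤ C)
    (h : ∀ t : ℝ, 0 < t → t ≤ 1 → 0 ≤ t * L + t ^ 2 * C) : 0 ≤ L := by
  by_contra hL
  push_neg at hL
  have hC1 : (0:ℝ) < C + 1 := by linarith
  set t : ℝ := min 1 (-L / (C + 1)) with ht_def
  have ht : 0 < t := lt_min one_pos (div_pos (by linarith) hC1)
  have h1 : t ≤ 1 := min_le_left _ _
  have h2 : t ≤ -L / (C + 1) := min_le_right _ _
  have h3 : t * (C + 1) ≤ -L := (le_div_iff₀ hC1).mp h2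
  have h4 := h t ht h1
  nlinarith [mul_le_mul_of_nonneg_left h3 ht.le, mul_pos ht ht]

lemma aux_vi {n : ℕ} {X : Set (Fin n → ℝ)} (hXcv : Convex ℝ X)
    {f : (Fin n → ℝ) → ℝ} (hf : ConvexOn ℝ Set.univ f)
    {r : ℝ} (hr : 0 < r) {c xt x0 : Fin n → ℝ} (hxt : xt ∈ X)
    (hmin : ∀ x ∈ X, f xt + c ⬝ᵥ xt + r / 2 * ((xt - x0) ⬝ᵥ (xt - x0)) ≤
      f x + c ⬝ᵥ x + r / 2 * ((x - x0) ⬝ᵥ (x - x0)))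
    (x : Fin n → ℝ) (hx : x ∈ X) :
    0 ≤ f x - f xt + c ⬝ᵥ (x - xt) + r * ((x - xt) ⬝ᵥ (xt - x0)) := by
  have hC : (0:ℝ) ≤ r / 2 * ((x - xt) ⬝ᵥ (x - xt)) := by
    have : 0 ≤ (x - xt) ⬝ᵥ (x - xt) :=
      Finset.sum_nonneg fun i _ => mul_self_nonneg _
    positivity
  refine aux_pos_limit hC ?_
  intro t ht0 ht1
  have hzeq : xt + t • (x - xt) = (1 - t) • xt + t • x := by
    funext i; simp [Pi.smul_apply, smul_eq_mul]; ring
  have hz : xt + t • (x - xt) ∈ X := by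
    rw [hzeq]; exact hXcv hxt hx (by linarith) ht0.le (by ring)
  have hfz : f (xt + t • (x - xt)) ≤ (1 - t) * f xt + t * f x := by
    rw [hzeq]
    exact hf.2 (Set.mem_univ xt) (Set.mem_univ x) (by linarith) ht0.le (by ring)
  have hm := hmin _ hz
  have e1 : c ⬝ᵥ (xt + t • (x - xt)) = c ⬝ᵥ xt + t * (c ⬝ᵥ (x - xt)) := by
    rw [dotProduct_add, dotProduct_smul, smul_eq_mul]
  have e2 : ((xt + t • (x - xt)) - x0) ⬝ᵥ ((xt + t • (x - xt)) - x0)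
      = (xt - x0) ⬝ᵥ (xt - x0) + 2 * t * ((x - xt) ⬝ᵥ (xt - x0))
        + t ^ 2 * ((x - xt) ⬝ᵥ (x - xt)) := by
    have h : (xt + t • (x - xt)) - x0 = (xt - x0) + t • (x - xt) := by
      funext i; simp [Pi.smul_apply, smul_eq_mul]; ring
    rw [h, add_dotProduct, dotProduct_add, dotProduct_add, dotProduct_smul,
      smul_dotProduct, dotProduct_smul, dotProduct_comm (x - xt) (xt - x0)]
    simp [smul_eq_mul]; ring
  rw [e1, e2] at hm
  nlinarith [hm, hfz]

/-- Nonnegativity of the cross term (5.9). -/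
theorem stmt_12 (n m : ℕ) (hn : 0 < n) (hm : 0 < m)
    (X : Set (Fin n → ℝ)) (Y : Set (Fin m → ℝ))
    (hXne : X.Nonempty) (hXcl : IsClosed X) (hXcv : Convex ℝ X)
    (hYne : Y.Nonempty) (hYcl : IsClosed Y) (hYcv : Convex ℝ Y)
    (f : (Fin n → ℝ) → ℝ) (g : (Fin m → ℝ) → ℝ)
    (hf : ConvexOn ℝ Set.univ f) (hg : ConvexOn ℝ Set.univ g)
    (A : Matrix (Fin m) (Fin n) ℝ) (r s α : ℝ) (hr : 0 < r) (hs : 0 < s)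
    (uk utk uk1 utk1 : PDVec n m)
    (hpredk : IsPrediction X Y f g A r s α uk utk)
    (hcorr : pdToVec uk1 = pdToVec uk - (pdM A s α).mulVec (pdToVec uk - pdToVec utk))
    (hpredk1 : IsPrediction X Y f g A r s α uk1 utk1) :
    (pdToVec utk - pdToVec utk1) ⬝ᵥ (pdQ A r s α).mulVec
        ((pdToVec uk - pdToVec utk) - (pdToVec uk1 - pdToVec utk1)) ≥ 0 := by
  obtain ⟨ha1X, hminxk, ha2Y, hminyk⟩ := hpredk
  obtain ⟨hb1X, hminxk1, hb2Y, hminyk1⟩ := hpredk1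
  have hflip : ∀ (v : Fin n → ℝ) (w : Fin m → ℝ), v ⬝ᵥ Aᵀ *ᵥ w = w ⬝ᵥ A *ᵥ v := by
    intro v w
    rw [dotProduct_mulVec, vecMul_transpose, dotProduct_comm]
  have hcomm' : ∀ (w : Fin m → ℝ) (v : Fin n → ℝ), (A *ᵥ v) ⬝ᵥ w = w ⬝ᵥ A *ᵥ v :=
    fun w v => dotProduct_comm _ _
  have hflip' : ∀ (v : Fin n → ℝ) (w : Fin m → ℝ), (Aᵀ *ᵥ w) ⬝ᵥ v = w ⬝ᵥ A *ᵥ v := by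
    intro v w; rw [dotProduct_comm]; exact hflip v w
  have hvx : ∀ (w : Fin m → ℝ) (v : Fin n → ℝ),
      (-(Aᵀ *ᵥ w)) ⬝ᵥ v = -(w ⬝ᵥ A *ᵥ v) := by
    intro w v; rw [neg_dotProduct, hflip']
  -- four variational inequalities
  have hminxk' : ∀ x ∈ X,
      f utk.1 + (-(Aᵀ *ᵥ uk.2)) ⬝ᵥ utk.1 + r / 2 * ((utk.1 - uk.1) ⬝ᵥ (utk.1 - uk.1)) ≤
        f x + (-(Aᵀ *ᵥ uk.2)) ⬝ᵥ x + r / 2 * ((x - uk.1) ⬝ᵥ (x - uk.1)) := by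
    intro x hx
    have h := hminxk x hx
    rw [hvx, hvx]
    linarith
  have hminxk1' : ∀ x ∈ X,
      f utk1.1 + (-(Aᵀ *ᵥ uk1.2)) ⬝ᵥ utk1.1 + r / 2 * ((utk1.1 - uk1.1) ⬝ᵥ (utk1.1 - uk1.1)) ≤
        f x + (-(Aᵀ *ᵥ uk1.2)) ⬝ᵥ x + r / 2 * ((x - uk1.1) ⬝ᵥ (x - uk1.1)) := by
    intro x hx
    have h := hminxk1 x hx
    rw [hvx, hvx]
    linarith
  have hminyk' : ∀ y ∈ Y,
      g utk.2 + (A *ᵥ (utk.1 + α • (utk.1 - uk.1))) ⬝ᵥ utk.2 +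
          s / 2 * ((utk.2 - uk.2) ⬝ᵥ (utk.2 - uk.2)) ≤
        g y + (A *ᵥ (utk.1 + α • (utk.1 - uk.1))) ⬝ᵥ y +
          s / 2 * ((y - uk.2) ⬝ᵥ (y - uk.2)) := by
    intro y hy
    have h := hminyk y hy
    rw [hcomm', hcomm']
    linarith
  have hminyk1' : ∀ y ∈ Y,
      g utk1.2 + (A *ᵥ (utk1.1 + α • (utk1.1 - uk1.1))) ⬝ᵥ utk1.2 +
          s / 2 * ((utk1.2 - uk1.2) ⬝ᵥ (utk1.2 - uk1.2)) ≤
        g y + (A *ᵥ (utk1.1 + α • (utk1.1 - uk1.1))) ⬝ᵥ y +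
          s / 2 * ((y - uk1.2) ⬝ᵥ (y - uk1.2)) := by
    intro y hy
    have h := hminyk1 y hy
    rw [hcomm', hcomm']
    linarith
  have I1 := aux_vi hXcv hf hr ha1X hminxk' utk1.1 hb1X
  have I2 := aux_vi hXcv hf hr hb1X hminxk1' utk.1 ha1X
  have I3 := aux_vi hYcv hg hs ha2Y hminyk' utk1.2 hb2Y
  have I4 := aux_vi hYcv hg hs hb2Y hminyk1' utk.2 ha2Y
  -- rewrite the goal into block form
  have hsub : ∀ (u v : PDVec n m),
      pdToVec u - pdToVec v = Sum.elim (u.1 - v.1) (u.2 - v.2) := by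
    intro u v; funext i; cases i <;> simp [pdToVec]
  have hsub2 : ∀ (p p' : Fin n → ℝ) (q q' : Fin m → ℝ),
      Sum.elim p q - Sum.elim p' q' = Sum.elim (p - p') (q - q') := by
    intro p p' q q'; funext i; cases i <;> simp
  rw [ge_iff_le, hsub, hsub, hsub, hsub2, pdQ, fromBlocks_mulVec,
    sumElim_dotProduct_sumElim]
  simp only [smul_mulVec, one_mulVec] at *
  simp only [Sum.elim_comp_inl, Sum.elim_comp_inr, mulVec_add, mulVec_sub, mulVec_smul, dotProduct_add, add_dotProduct,
    dotProduct_sub, sub_dotProduct, dotProduct_smul, smul_dotProduct, smul_eq_mul,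
    dotProduct_neg, neg_dotProduct, hflip, hcomm', hflip',
    dotProduct_comm utk1.1 utk.1, dotProduct_comm uk.1 utk.1, dotProduct_comm uk.1 utk1.1,
    dotProduct_comm uk1.1 utk.1, dotProduct_comm uk1.1 utk1.1, dotProduct_comm uk1.1 uk.1,
    dotProduct_comm utk1.2 utk.2, dotProduct_comm uk.2 utk.2, dotProduct_comm uk.2 utk1.2,
    dotProduct_comm uk1.2 utk.2, dotProduct_comm uk1.2 utk1.2, dotProduct_comm uk1.2 uk.2]
    at I1 I2 I3 I4 ⊢
  ring_nf at I1 I2 I3 I4 ⊢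
  linarith [I1, I2, I3, I4]
end
end

section
/- (Monotonicity of the residual) Let uᵏ ∈ ℝⁿ × ℝᵐ, let ũᵏ be a prediction from uᵏ, let u^{k+1} = uᵏ − M(uᵏ − ũᵏ), and let ũ^{k+1} be a prediction from u^{k+1}. Then ‖M(uᵏ − ũᵏ)‖²_H − ‖M(u^{k+1} − ũ^{k+1})‖²_H ≥ ‖(uᵏ − ũᵏ) − (u^{k+1} − ũ^{k+1})‖²_G; in particular, if r·s > (1−α+α²)·λmax(AᵀA) (so that G is positive definite), then ‖M(u^{k+1} − ũ^{k+1})‖²_H ≤ ‖M(uᵏ − ũᵏ)‖²_H. -/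
open Matrix

noncomputable section

theorem dp_transfer {ι κ : Type*} [Fintype ι] [Fintype κ] (u : ι → ℝ) (v : κ → ℝ)
    (A : Matrix ι κ ℝ) : u ⬝ᵥ A.mulVec v = Aᵀ.mulVec u ⬝ᵥ v := by
  rw [Matrix.dotProduct_mulVec, Matrix.mulVec_transpose]

theorem rayleigh {n : ℕ} (hn : 0 < n) (B : Matrix (Fin n) (Fin n) ℝ) (hB : B.IsHermitian)
    (x : Fin n → ℝ) :
    x ⬝ᵥ B.mulVec x ≤ (⨆ i, hB.eigenvalues i) * (x ⬝ᵥ x) := by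
  haveI : Nonempty (Fin n) := ⟨⟨0, hn⟩⟩
  set U : Matrix (Fin n) (Fin n) ℝ := (hB.eigenvectorUnitary : Matrix (Fin n) (Fin n) ℝ) with hUdef
  have hstar : star U = Uᵀ := by
    ext i j; simp [Matrix.star_apply, Matrix.transpose_apply]
  have hUU : U * Uᵀ = 1 := by
    rw [← hstar]; exact (Unitary.mem_iff.mp (hB.eigenvectorUnitary).2).2
  have hspec : B = U * Matrix.diagonal hB.eigenvalues * Uᵀ := by
    have := hB.spectral_theorem
    rw [Unitary.conjStarAlgAut_apply, ← hUdef, hstar] at this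
    simpa using this
  set z : Fin n → ℝ := Uᵀ.mulVec x with hz
  have hxz : x ⬝ᵥ x = z ⬝ᵥ z := by
    rw [hz, ← dp_transfer, Matrix.mulVec_mulVec, hUU, Matrix.one_mulVec]
  have hform : x ⬝ᵥ B.mulVec x = ∑ i, hB.eigenvalues i * (z i * z i) := by
    conv_lhs => rw [hspec, ← Matrix.mulVec_mulVec, ← Matrix.mulVec_mulVec]
    rw [dp_transfer, ← hz]
    simp [dotProduct, Matrix.mulVec_diagonal]
    exact Finset.sum_congr rfl fun i _ => by ring
  rw [hform, hxz]
  simp only [dotProduct, Finset.mul_sum]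
  apply Finset.sum_le_sum
  intro i _
  have hle : hB.eigenvalues i ≤ ⨆ j, hB.eigenvalues j :=
    le_ciSup (Set.Finite.bddAbove (Set.finite_range _)) i
  nlinarith [mul_self_nonneg (z i)]

theorem min_vi {n : ℕ} (X : Set (Fin n → ℝ)) (hX : Convex ℝ X)
    (f : (Fin n → ℝ) → ℝ) (hf : ConvexOn ℝ Set.univ f)
    (ρ : ℝ) (hρ : 0 < ρ) (b x0 xt : Fin n → ℝ) (hxt : xt ∈ X)
    (hmin : ∀ x ∈ X, f xt + b ⬝ᵥ xt + ρ/2 * ((xt - x0) ⬝ᵥ (xt - x0)) ≤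
      f x + b ⬝ᵥ x + ρ/2 * ((x - x0) ⬝ᵥ (x - x0))) :
    ∀ x ∈ X, 0 ≤ f x - f xt + b ⬝ᵥ (x - xt) + ρ * ((x - xt) ⬝ᵥ (xt - x0)) := by
  intro x hx
  set v : Fin n → ℝ := x - xt with hv
  set K : ℝ := v ⬝ᵥ v with hK
  have hK0 : 0 ≤ K := Finset.sum_nonneg fun i _ => mul_self_nonneg _
  set c : ℝ := f x - f xt + b ⬝ᵥ v + ρ * (v ⬝ᵥ (xt - x0)) with hcdef
  have hstep : ∀ t : ℝ, t ∈ Set.Ioc (0:ℝ) 1 → 0 ≤ c + t * (ρ/2 * K) := by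
    intro t ht
    have hmem : xt + t • v ∈ X := by
      have h := hX hxt hx (by linarith [ht.2] : (0:ℝ) ≤ 1 - t) (le_of_lt ht.1) (by ring)
      have : (1 - t) • xt + t • x = xt + t • v := by
        funext i; simp [hv]; ring
      rwa [this] at h
    have h1 := hmin _ hmem
    have h2 : f (xt + t • v) ≤ (1 - t) * f xt + t * f x := by
      have h := hf.2 (Set.mem_univ xt) (Set.mem_univ x)
        (by linarith [ht.2] : (0:ℝ) ≤ 1 - t) (le_of_lt ht.1) (by ring)
      have e : (1 - t) • xt + t • x = xt + t • v := by
        funext i; simp [hv]; ring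
      rw [e] at h
      simpa [smul_eq_mul] using h
    have e1 : b ⬝ᵥ (xt + t • v) = b ⬝ᵥ xt + t * (b ⬝ᵥ v) := by
      simp [dotProduct_add, dotProduct_smul, smul_eq_mul]
    have e2 : ((xt + t • v) - x0) ⬝ᵥ ((xt + t • v) - x0) =
        (xt - x0) ⬝ᵥ (xt - x0) + 2 * t * (v ⬝ᵥ (xt - x0)) + t^2 * K := by
      have : (xt + t • v) - x0 = (xt - x0) + t • v := by funext i; simp; ring
      rw [this]
      simp [dotProduct_add, add_dotProduct, dotProduct_smul, smul_dotProduct, smul_eq_mul, hK]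
      rw [dotProduct_comm xt v, dotProduct_comm x0 v]
      ring
    rw [e1, e2] at h1
    have h3 : 0 ≤ t * (c + t * (ρ/2 * K)) := by nlinarith [h1, h2]
    exact nonneg_of_mul_nonneg_right h3 ht.1
  by_contra hcon
  push_neg at hcon
  have hclt : c < 0 := hcon
  set D : ℝ := ρ/2 * K + 1 with hD
  have hD0 : 0 < D := by positivity
  have ht0 : 0 < min 1 (-c / (2 * D)) := lt_min one_pos (div_pos (by linarith) (by linarith))
  have hspec := hstep _ ⟨ht0, min_le_left _ _⟩
  have h4 : min 1 (-c / (2 * D)) * (ρ/2 * K) ≤ min 1 (-c / (2 * D)) * D := by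
    apply mul_le_mul_of_nonneg_left (by simp only [hD]; linarith) (le_of_lt ht0)
  have h5 : min 1 (-c / (2 * D)) * D ≤ (-c / (2 * D)) * D :=
    mul_le_mul_of_nonneg_right (min_le_right _ _) (le_of_lt hD0)
  have h6 : (-c / (2 * D)) * D = -c / 2 := by field_simp
  linarith

theorem key_algebra {ι : Type*} [Fintype ι] (Q M H G : Matrix ι ι ℝ)
    (hHM : H * M = Q) (hG : G = Q + Qᵀ - Mᵀ * Q) (hHsym : Hᵀ = H)
    (w d : ι → ℝ) (hcross : 0 ≤ (M.mulVec w - d) ⬝ᵥ Q.mulVec d) :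
    (M.mulVec w) ⬝ᵥ H.mulVec (M.mulVec w)
      - (M.mulVec (w - d)) ⬝ᵥ H.mulVec (M.mulVec (w - d))
      - d ⬝ᵥ G.mulVec d ≥ 0 := by
  set a := M.mulVec w with ha
  set b := M.mulVec d with hb
  have hsub : M.mulVec (w - d) = a - b := by rw [Matrix.mulVec_sub]
  have hHb : H.mulVec b = Q.mulVec d := by rw [hb, Matrix.mulVec_mulVec, hHM]
  have hsymm : ∀ u v : ι → ℝ, u ⬝ᵥ H.mulVec v = v ⬝ᵥ H.mulVec u := by
    intro u v
    rw [dp_transfer, hHsym, dotProduct_comm]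
  have hbHb : b ⬝ᵥ H.mulVec b = d ⬝ᵥ (Mᵀ * Q).mulVec d := by
    rw [hHb, hb, dotProduct_comm, dp_transfer, Matrix.mulVec_mulVec, dotProduct_comm]
  have hQt : d ⬝ᵥ Qᵀ.mulVec d = d ⬝ᵥ Q.mulVec d := by
    rw [dp_transfer, Matrix.transpose_transpose, dotProduct_comm]
  have hGd : d ⬝ᵥ G.mulVec d =
      2 * (d ⬝ᵥ Q.mulVec d) - d ⬝ᵥ (Mᵀ * Q).mulVec d := by
    rw [hG]
    simp only [Matrix.sub_mulVec, Matrix.add_mulVec, dotProduct_add, dotProduct_sub]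
    rw [hQt]; ring
  have hexp : (a - b) ⬝ᵥ H.mulVec (a - b) =
      a ⬝ᵥ H.mulVec a - 2 * (a ⬝ᵥ H.mulVec b) + b ⬝ᵥ H.mulVec b := by
    simp only [Matrix.mulVec_sub, dotProduct_sub, sub_dotProduct]
    rw [hsymm b a]; ring
  have haHb : a ⬝ᵥ H.mulVec b = a ⬝ᵥ Q.mulVec d := by rw [hHb]
  have hcross2 : 0 ≤ a ⬝ᵥ Q.mulVec d - d ⬝ᵥ Q.mulVec d := by
    simpa [sub_dotProduct] using hcross
  rw [hsub, hexp, haHb, hbHb, hGd]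
  linarith


theorem pd_id1 {n m : ℕ} (A : Matrix (Fin m) (Fin n) ℝ) (r s α : ℝ) (hs : s ≠ 0) :
    pdH A r s α * pdM A s α = pdQ A r s α := by
  have hdm : (1 - α) / s * s = 1 - α := div_mul_cancel₀ _ hs
  unfold pdH pdM pdQ
  rw [Matrix.fromBlocks_multiply]
  apply Matrix.fromBlocks_inj.mpr
  refine ⟨?_, ?_, ?_, ?_⟩
  · simp [Matrix.mul_smul, Matrix.smul_mul, smul_smul, add_mul]
  · simp
  · simp [Matrix.mul_smul, Matrix.smul_mul, smul_smul, hdm]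
    module
  · simp

theorem pd_id3 {n m : ℕ} (A : Matrix (Fin m) (Fin n) ℝ) (r s α : ℝ) :
    (pdH A r s α)ᵀ = pdH A r s α := by
  have hAt : (Aᵀ * A)ᵀ = Aᵀ * A := by
    rw [Matrix.transpose_mul, Matrix.transpose_transpose]
  unfold pdH
  rw [Matrix.fromBlocks_transpose]
  apply Matrix.fromBlocks_inj.mpr
  refine ⟨?_, ?_, ?_, ?_⟩ <;> simp [hAt, Matrix.transpose_add, Matrix.transpose_smul]

theorem pd_id2 {n m : ℕ} (A : Matrix (Fin m) (Fin n) ℝ) (r s α : ℝ) (hs : s ≠ 0) :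
    pdG A r s α = pdQ A r s α + (pdQ A r s α)ᵀ - (pdM A s α)ᵀ * pdQ A r s α := by
  have hdm : (1 - α) / s * s = 1 - α := div_mul_cancel₀ _ hs
  have hdm2 : (1 - α) / s * α = α * (1 - α) / s := by ring
  unfold pdG pdQ pdM
  rw [Matrix.fromBlocks_transpose, Matrix.fromBlocks_transpose, Matrix.fromBlocks_multiply,
    Matrix.fromBlocks_add]
  rw [show ∀ (P Q R S P' Q' R' S' : _),
      (Matrix.fromBlocks P Q R S : Matrix (Fin n ⊕ Fin m) (Fin n ⊕ Fin m) ℝ) -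
        Matrix.fromBlocks P' Q' R' S' =
        Matrix.fromBlocks (P - P') (Q - Q') (R - R') (S - S') from ?_]
  · apply Matrix.fromBlocks_inj.mpr
    refine ⟨?_, ?_, ?_, ?_⟩
    · simp [Matrix.mul_smul, Matrix.smul_mul, smul_smul, hdm2]
      match_scalars <;> field_simp
    · simp [Matrix.mul_smul, Matrix.smul_mul, smul_smul, hdm]
      match_scalars <;> field_simp <;> ring
    · simp
    · simp
  · intro P Q R S P' Q' R' S'
    rw [sub_eq_add_neg, Matrix.fromBlocks_neg, Matrix.fromBlocks_add]
    simp [sub_eq_add_neg]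

set_option maxHeartbeats 2000000

/-- Monotonicity of the residual `‖M(uᵏ − ũᵏ)‖²_H` (5.4). -/
theorem stmt_13 (n m : ℕ) (hn : 0 < n) (hm : 0 < m)
    (X : Set (Fin n → ℝ)) (Y : Set (Fin m → ℝ))
    (hXne : X.Nonempty) (hXcl : IsClosed X) (hXcv : Convex ℝ X)
    (hYne : Y.Nonempty) (hYcl : IsClosed Y) (hYcv : Convex ℝ Y)
    (f : (Fin n → ℝ) → ℝ) (g : (Fin m → ℝ) → ℝ)
    (hf : ConvexOn ℝ Set.univ f) (hg : ConvexOn ℝ Set.univ g)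
    (A : Matrix (Fin m) (Fin n) ℝ) (r s α : ℝ) (hr : 0 < r) (hs : 0 < s)
    (hA : (Aᵀ * A).IsHermitian)
    (uk utk uk1 utk1 : PDVec n m)
    (hpredk : IsPrediction X Y f g A r s α uk utk)
    (hcorr : pdToVec uk1 = pdToVec uk - (pdM A s α).mulVec (pdToVec uk - pdToVec utk))
    (hpredk1 : IsPrediction X Y f g A r s α uk1 utk1) :
    pdNormSq (pdH A r s α) ((pdM A s α).mulVec (pdToVec uk - pdToVec utk)) -
        pdNormSq (pdH A r s α) ((pdM A s α).mulVec (pdToVec uk1 - pdToVec utk1)) ≥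
      pdNormSq (pdG A r s α)
        ((pdToVec uk - pdToVec utk) - (pdToVec uk1 - pdToVec utk1)) ∧
    ((1 - α + α ^ 2) * (⨆ i, hA.eigenvalues i) < r * s →
      pdNormSq (pdH A r s α) ((pdM A s α).mulVec (pdToVec uk1 - pdToVec utk1)) ≤
        pdNormSq (pdH A r s α) ((pdM A s α).mulVec (pdToVec uk - pdToVec utk))) := by
    classical
  have hs0 : s ≠ 0 := ne_of_gt hs
  set w : Fin n ⊕ Fin m → ℝ := pdToVec uk - pdToVec utk with hw
  set w' : Fin n ⊕ Fin m → ℝ := pdToVec uk1 - pdToVec utk1 with hw'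
  set d : Fin n ⊕ Fin m → ℝ := w - w' with hdd
  set dp : Fin n → ℝ := (uk.1 - utk.1) - (uk1.1 - utk1.1) with hdp
  set dq : Fin m → ℝ := (uk.2 - utk.2) - (uk1.2 - utk1.2) with hdq
  have hAswap : ∀ (u : Fin n → ℝ) (v : Fin m → ℝ),
      u ⬝ᵥ Aᵀ.mulVec v = v ⬝ᵥ A.mulVec u := by
    intro u v
    rw [dp_transfer, Matrix.transpose_transpose, dotProduct_comm]
  have hAswap2 : ∀ (u : Fin m → ℝ) (v : Fin n → ℝ),
      (Aᵀ.mulVec u) ⬝ᵥ v = u ⬝ᵥ A.mulVec v := by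
    intro u v
    rw [← dp_transfer]
  have hAC : ∀ (u : Fin n → ℝ) (v : Fin m → ℝ),
      (A.mulVec u) ⬝ᵥ v = v ⬝ᵥ A.mulVec u := by
    intro u v; rw [dotProduct_comm]
  -- variational inequalities from the predictions
  have hVA : ∀ x ∈ X, 0 ≤ f x - f utk.1 + (-(Aᵀ.mulVec uk.2)) ⬝ᵥ (x - utk.1)
      + r * ((x - utk.1) ⬝ᵥ (utk.1 - uk.1)) := by
    apply min_vi X hXcv f hf r hr _ uk.1 utk.1 hpredk.1
    intro x hx
    have h := hpredk.2.1 x hx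
    have e : ∀ z : Fin n → ℝ, (-(Aᵀ.mulVec uk.2)) ⬝ᵥ z = -(uk.2 ⬝ᵥ A.mulVec z) := by
      intro z; rw [neg_dotProduct, dp_transfer]
    rw [e, e]; linarith
  have hVA1 : ∀ x ∈ X, 0 ≤ f x - f utk1.1 + (-(Aᵀ.mulVec uk1.2)) ⬝ᵥ (x - utk1.1)
      + r * ((x - utk1.1) ⬝ᵥ (utk1.1 - uk1.1)) := by
    apply min_vi X hXcv f hf r hr _ uk1.1 utk1.1 hpredk1.1
    intro x hx
    have h := hpredk1.2.1 x hx
    have e : ∀ z : Fin n → ℝ, (-(Aᵀ.mulVec uk1.2)) ⬝ᵥ z = -(uk1.2 ⬝ᵥ A.mulVec z) := by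
      intro z; rw [neg_dotProduct, dp_transfer]
    rw [e, e]; linarith
  have hVB : ∀ y ∈ Y, 0 ≤ g y - g utk.2
      + (A.mulVec (utk.1 + α • (utk.1 - uk.1))) ⬝ᵥ (y - utk.2)
      + s * ((y - utk.2) ⬝ᵥ (utk.2 - uk.2)) := by
    apply min_vi Y hYcv g hg s hs _ uk.2 utk.2 hpredk.2.2.1
    intro y hy
    have h := hpredk.2.2.2 y hy
    rw [hAC, hAC]; linarith
  have hVB1 : ∀ y ∈ Y, 0 ≤ g y - g utk1.2
      + (A.mulVec (utk1.1 + α • (utk1.1 - uk1.1))) ⬝ᵥ (y - utk1.2)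
      + s * ((y - utk1.2) ⬝ᵥ (utk1.2 - uk1.2)) := by
    apply min_vi Y hYcv g hg s hs _ uk1.2 utk1.2 hpredk1.2.2.1
    intro y hy
    have h := hpredk1.2.2.2 y hy
    rw [hAC, hAC]; linarith
  have a1 := hVA utk1.1 hpredk1.1
  have a2 := hVA1 utk.1 hpredk.1
  have b1 := hVB utk1.2 hpredk1.2.2.1
  have b2 := hVB1 utk.2 hpredk.2.2.1
  -- correction step
  have hMw : (pdM A s α).mulVec w = pdToVec uk - pdToVec uk1 := by
    rw [hcorr]; abel
  have hud : pdToVec utk - pdToVec utk1 = (pdM A s α).mulVec w - d := by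
    rw [hMw]
    simp only [hdd, hw, hw']
    abel
  have hL : pdToVec utk - pdToVec utk1 = Sum.elim (utk.1 - utk1.1) (utk.2 - utk1.2) := by
    funext i; cases i <;> simp [pdToVec]
  have hD : d = Sum.elim dp dq := by
    simp only [hdd, hw, hw', hdp, hdq]
    funext i; cases i <;> simp [pdToVec]
  -- crossing inequality
  have hcross : 0 ≤ ((pdM A s α).mulVec w - d) ⬝ᵥ (pdQ A r s α).mulVec d := by
    rw [← hud, hL, hD]
    unfold pdQ
    rw [Matrix.fromBlocks_mulVec, sumElim_dotProduct_sumElim]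
    simp only [Sum.elim_comp_inl, Sum.elim_comp_inr, Matrix.smul_mulVec,
      Matrix.one_mulVec, hdp, hdq]
    simp only [Matrix.mulVec_add, Matrix.mulVec_sub, Matrix.mulVec_smul,
      dotProduct_add, add_dotProduct, dotProduct_sub, sub_dotProduct,
      dotProduct_smul, smul_dotProduct, smul_eq_mul, neg_dotProduct, dotProduct_neg,
      hAswap, hAswap2, hAC] at a1 a2 b1 b2 ⊢
    linarith
  have halg := key_algebra (pdQ A r s α) (pdM A s α) (pdH A r s α) (pdG A r s α)
    (pd_id1 A r s α hs0) (pd_id2 A r s α hs0) (pd_id3 A r s α) w d hcross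
  have hwd : w - d = w' := by rw [hdd]; abel
  rw [hwd] at halg
  have part1 : pdNormSq (pdH A r s α) ((pdM A s α).mulVec w) -
      pdNormSq (pdH A r s α) ((pdM A s α).mulVec w') ≥ pdNormSq (pdG A r s α) d := by
    unfold pdNormSq
    linarith [halg]
  refine ⟨part1, ?_⟩
  intro hcond
  have hGpos : 0 ≤ pdNormSq (pdG A r s α) d := by
    rw [hD]
    unfold pdNormSq pdG
    rw [Matrix.fromBlocks_mulVec, sumElim_dotProduct_sumElim]
    simp only [Matrix.add_mulVec, Matrix.smul_mulVec, Matrix.one_mulVec,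
      dotProduct_add, dotProduct_smul, smul_eq_mul]
    have hP : dp ⬝ᵥ (Aᵀ * A).mulVec dp = (A.mulVec dp) ⬝ᵥ (A.mulVec dp) := by
      rw [← Matrix.mulVec_mulVec, hAswap, hAC]
    have hPA : dp ⬝ᵥ Aᵀ.mulVec dq = (A.mulVec dp) ⬝ᵥ dq := by
      rw [hAswap, hAC]
    set N1 : ℝ := dp ⬝ᵥ dp with hN1
    set N2 : ℝ := dq ⬝ᵥ dq with hN2
    set P : ℝ := (A.mulVec dp) ⬝ᵥ (A.mulVec dp) with hPdef
    set T : ℝ := dq ⬝ᵥ (A.mulVec dp) with hT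
    have hN1p : 0 ≤ N1 := Finset.sum_nonneg fun i _ => mul_self_nonneg _
    have hN2p : 0 ≤ N2 := Finset.sum_nonneg fun i _ => mul_self_nonneg _
    have hPp : 0 ≤ P := Finset.sum_nonneg fun i _ => mul_self_nonneg _
    have hyoung : 0 ≤ s^2 * N2 + 2 * s * T + P := by
      have h0 : 0 ≤ (s • dq + A.mulVec dp) ⬝ᵥ (s • dq + A.mulVec dp) :=
        Finset.sum_nonneg fun i _ => mul_self_nonneg _
      have : (s • dq + A.mulVec dp) ⬝ᵥ (s • dq + A.mulVec dp) =
          s^2 * N2 + 2 * s * T + P := by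
        simp only [dotProduct_add, add_dotProduct, dotProduct_smul, smul_dotProduct,
          smul_eq_mul, hN2, hT, hPdef, hAC]
        ring
      linarith [h0, this.symm.le]
    have hray : P ≤ (⨆ i, hA.eigenvalues i) * N1 := by
      have h := rayleigh hn (Aᵀ * A) hA dp
      rw [hP] at h
      rw [hPdef, hN1]
      exact h
    simp only [Sum.elim_comp_inl, Sum.elim_comp_inr]
    rw [hP, hPA, hAC dp dq, ← hN1, ← hN2, ← hT]
    refine nonneg_of_mul_nonneg_right ?_ hs
    have hssP : s * (α*(1-α)/s*P) = α*(1-α)*P := by field_simp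
    have hc0 : (0:ℝ) < 1 - α + α^2 := by nlinarith [sq_nonneg (2*α-1)]
    have hray' : (1-α+α^2)*P ≤ (1-α+α^2)*((⨆ i, hA.eigenvalues i)*N1) :=
      mul_le_mul_of_nonneg_left hray hc0.le
    have hcnd : (1-α+α^2)*(⨆ i, hA.eigenvalues i)*N1 ≤ r*s*N1 :=
      mul_le_mul_of_nonneg_right hcond.le hN1p
    linarith [hyoung, hssP, hray', hcnd]
  linarith [part1, hGpos]
end
end
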